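/- arXiv:1409.4276 — 2 statements merged into one kernel-verified Lean document; each statement's English description precedes it below -/
import Mathlib

section
/- Let T and T' be ternary trees on the same label set N with |N| = n ≥ 4. If the sets of embedded quartet topologies coincide, Q_T = Q_{T'}, then T and T' are isomorphic as graphs via an isomorphism that fixes each labeled leaf. Equivalently, non-isomorphic (leaf-label-preservingly) ternary trees T ≠ T' on N satisfy Q_T ≠ Q_{T'}. -/
/-- A ternary tree on a label set `N`: a finite undirected tree in which every
vertex has degree 1 or 3, together with a bijective labeling of the degree-1
vertices (leaves) by the elements of `N`. -/
structure TernaryTree (N : Type) where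
  V : Type
  [fintypeV : Fintype V]
  [decEqV : DecidableEq V]
  G : SimpleGraph V
  [decAdj : DecidableRel G.Adj]
  isTree : G.IsTree
  deg13 : ∀ v : V, G.degree v = 1 ∨ G.degree v = 3
  leaf : N → V
  leaf_inj : Function.Injective leaf
  leaf_deg : ∀ x : N, G.degree (leaf x) = 1
  leaf_surj : ∀ v : V, G.degree v = 1 → ∃ x : N, leaf x = v

attribute [instance] TernaryTree.fintypeV TernaryTree.decEqV TernaryTree.decAdj

/-- `T` is consistent with (embeds) the quartet topology `uv|wx`: the unique path
from leaf `u` to leaf `v` is vertex-disjoint from the unique path from leaf `w`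
to leaf `x`. -/
def TernaryTree.Consistent {N : Type} (T : TernaryTree N) (u v w x : N) : Prop :=
  ∃ (p : T.G.Walk (T.leaf u) (T.leaf v)) (q : T.G.Walk (T.leaf w) (T.leaf x)),
    p.IsPath ∧ q.IsPath ∧ ∀ a, a ∈ p.support → a ∉ q.support

/-- A quartet topology on `N`: a partition of a 4-element subset of `N`
into two unordered pairs, encoded as an element of `Sym2 (Sym2 N)`. -/
def IsQuartetTopology {N : Type} (q : Sym2 (Sym2 N)) : Prop :=
  ∃ u v w x : N, u ≠ v ∧ u ≠ w ∧ u ≠ x ∧ v ≠ w ∧ v ≠ x ∧ w ≠ x ∧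
    q = s(s(u, v), s(w, x))

/-- `QT T` is the set of quartet topologies embedded in the ternary tree `T`. -/
def TernaryTree.QT {N : Type} (T : TernaryTree N) : Set (Sym2 (Sym2 N)) :=
  {q | ∃ u v w x : N, u ≠ v ∧ u ≠ w ∧ u ≠ x ∧ v ≠ w ∧ v ≠ x ∧ w ≠ x ∧
        q = s(s(u, v), s(w, x)) ∧ T.Consistent u v w x}

/-- A leaf-label-preserving isomorphism between two ternary trees on the same
label set `N`. -/
def TreeIso {N : Type} (T T' : TernaryTree N) : Prop :=
  ∃ φ : T.V ≃ T'.V,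
    (∀ a b : T.V, T.G.Adj a b ↔ T'.G.Adj (φ a) (φ b)) ∧
    ∀ x : N, φ (T.leaf x) = T'.leaf x

namespace TernaryTree

open SimpleGraph Walk

variable {N : Type} (T : TernaryTree N)

/-- The canonical path between two vertices of the tree. -/
noncomputable def pp (a b : T.V) : T.G.Walk a b :=
  (T.isTree.existsUnique_path a b).choose

lemma pp_isPath (a b : T.V) : (T.pp a b).IsPath :=
  (T.isTree.existsUnique_path a b).choose_spec.1

lemma pp_unique {a b : T.V} {p : T.G.Walk a b} (hp : p.IsPath) : p = T.pp a b :=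
  (T.isTree.existsUnique_path a b).choose_spec.2 p hp

lemma pp_self (a : T.V) : T.pp a a = Walk.nil :=
  (T.pp_unique (Walk.IsPath.nil)).symm

lemma pp_reverse (a b : T.V) : (T.pp a b).reverse = T.pp b a :=
  T.pp_unique ((T.pp_isPath a b).reverse)

lemma mem_pp_symm {a b z : T.V} (h : z ∈ (T.pp a b).support) :
    z ∈ (T.pp b a).support := by
  rw [← T.pp_reverse a b, support_reverse, List.mem_reverse]; exact h

lemma pp_length_pos {a b : T.V} (h : a ≠ b) : 0 < (T.pp a b).length := by
  rcases Nat.eq_zero_or_pos (T.pp a b).length with h0 | h0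
  · exact absurd (Walk.eq_of_length_eq_zero h0) h
  · exact h0

/-- The second vertex on the canonical path from `p` to `u`. -/
noncomputable def nxt (p u : T.V) : T.V := (T.pp p u).getVert 1

lemma nxt_self (p : T.V) : T.nxt p p = p := by
  unfold nxt
  rw [T.pp_self p]
  exact Walk.getVert_of_length_le _ (by simp)

lemma nxt_adj {p u : T.V} (h : p ≠ u) : T.G.Adj p (T.nxt p u) := by
  have := Walk.adj_getVert_succ (T.pp p u) (i := 0) (T.pp_length_pos h)
  rwa [Walk.getVert_zero] at this

lemma nxt_ne_self {p u : T.V} (h : p ≠ u) : T.nxt p u ≠ p := by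
  intro he
  have h2 := T.nxt_adj h
  rw [he] at h2
  exact T.G.loopless.irrefl p h2

lemma nxt_mem {p u : T.V} : T.nxt p u ∈ (T.pp p u).support := by
  by_cases h : p = u
  · subst h; rw [T.nxt_self]; exact Walk.start_mem_support _
  · show (T.pp p u).getVert 1 ∈ _
    exact Walk.mem_support_iff_exists_getVert.mpr ⟨1, rfl, T.pp_length_pos h⟩

lemma pp_takeUntil {a b z : T.V} (h : z ∈ (T.pp a b).support) :
    (T.pp a b).takeUntil z h = T.pp a z :=
  T.pp_unique ((T.pp_isPath a b).takeUntil h)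

lemma pp_dropUntil {a b z : T.V} (h : z ∈ (T.pp a b).support) :
    (T.pp a b).dropUntil z h = T.pp z b :=
  T.pp_unique ((T.pp_isPath a b).dropUntil h)

lemma pp_decomp {a b z : T.V} (h : z ∈ (T.pp a b).support) :
    T.pp a b = (T.pp a z).append (T.pp z b) := by
  conv_lhs => rw [← Walk.take_spec (T.pp a b) h]
  rw [T.pp_takeUntil h, T.pp_dropUntil h]

lemma mem_pp_decomp {a b z y : T.V} (h : z ∈ (T.pp a b).support)
    (hy : y ∈ (T.pp a b).support) :
    y ∈ (T.pp a z).support ∨ y ∈ (T.pp z b).support := by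
  rw [T.pp_decomp h, Walk.mem_support_append_iff] at hy; exact hy

lemma supp_pp_sub_left {a b z : T.V} (h : z ∈ (T.pp a b).support) :
    ∀ y ∈ (T.pp a z).support, y ∈ (T.pp a b).support := by
  intro y hy
  rw [T.pp_decomp h, Walk.mem_support_append_iff]; exact Or.inl hy

lemma supp_pp_sub_right {a b z : T.V} (h : z ∈ (T.pp a b).support) :
    ∀ y ∈ (T.pp z b).support, y ∈ (T.pp a b).support := by
  intro y hy
  rw [T.pp_decomp h, Walk.mem_support_append_iff]; exact Or.inr hy

lemma append_isPath {a b c : T.V} {p : T.G.Walk a b} {q : T.G.Walk b c}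
    (hp : p.IsPath) (hq : q.IsPath)
    (hd : ∀ z, z ∈ p.support → z ∈ q.support → z = b) :
    (p.append q).IsPath := by
  rw [Walk.isPath_def, Walk.support_append, List.nodup_append]
  refine ⟨hp.support_nodup, ?_, ?_⟩
  · have := hq.support_nodup
    rw [q.support_eq_cons] at this
    exact this.of_cons
  · intro z hz w hz' hzw
    subst hzw
    have hzq : z ∈ q.support := by
      rw [q.support_eq_cons]; exact List.mem_cons_of_mem _ hz'
    have hzb := hd z hz hzq
    subst hzb
    have := hq.support_nodup
    rw [q.support_eq_cons, List.nodup_cons] at this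
    exact this.1 hz'

/-- Gluing two canonical paths that only share the midpoint. -/
lemma pp_glue {a b m : T.V}
    (hd : ∀ z, z ∈ (T.pp a m).support → z ∈ (T.pp m b).support → z = m) :
    T.pp a b = (T.pp a m).append (T.pp m b) :=
  (T.pp_unique (T.append_isPath (T.pp_isPath a m) (T.pp_isPath m b) hd)).symm

lemma mem_pp_glue {a b m : T.V}
    (hd : ∀ z, z ∈ (T.pp a m).support → z ∈ (T.pp m b).support → z = m) :
    m ∈ (T.pp a b).support := by
  rw [T.pp_glue hd, Walk.mem_support_append_iff]
  exact Or.inl (Walk.end_mem_support _)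

lemma pp_antisymm {a m m' : T.V} (h1 : m ∈ (T.pp a m').support)
    (h2 : m' ∈ (T.pp a m).support) : m = m' := by
  have e1 := congrArg Walk.length (T.pp_decomp h1)
  have e2 := congrArg Walk.length (T.pp_decomp h2)
  rw [Walk.length_append] at e1 e2
  have : (T.pp m m').length = 0 := by omega
  exact Walk.eq_of_length_eq_zero this

lemma nxt_eq {p u z : T.V} (hz : z ∈ (T.pp p u).support) (hzp : z ≠ p) :
    T.nxt p z = T.nxt p u := by
  have hpu : p ≠ u := by
    rintro rfl
    rw [T.pp_self] at hz
    exact hzp (by simpa using hz)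
  unfold nxt
  have hdec := T.pp_decomp hz
  have hlen : 0 < (T.pp p z).length := T.pp_length_pos (Ne.symm hzp)
  rw [hdec, Walk.getVert_append]
  by_cases h1 : 1 < (T.pp p z).length
  · rw [if_pos h1]
  · have hl : (T.pp p z).length = 1 := by omega
    rw [if_neg h1, hl]
    simp [Walk.getVert_zero, ← hl, Walk.getVert_length]

lemma nxt_ne {p u v : T.V} (h : p ∈ (T.pp u v).support) (hu : p ≠ u) (hv : p ≠ v) :
    T.nxt p u ≠ T.nxt p v := by
  intro hc
  set c := T.nxt p v with hcdef
  have hcadj : T.G.Adj p c := T.nxt_adj hv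
  have hcp : c ≠ p := T.nxt_ne_self hv
  have hcu : c ∈ (T.pp p u).support := hc ▸ T.nxt_mem
  have hcv : c ∈ (T.pp p v).support := T.nxt_mem
  have hcu' : c ∈ (T.pp u p).support := T.mem_pp_symm hcu
  -- decompose pp u v at p
  have hnodup := (T.pp_isPath u v).support_nodup
  rw [T.pp_decomp h, Walk.support_append, List.nodup_append] at hnodup
  refine hnodup.2.2 c hcu' c ?_ rfl
  have := (T.pp p v).support_eq_cons
  rw [this] at hcv
  rcases List.mem_cons.mp hcv with h' | h'
  · exact absurd h' hcp
  · exact h'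

lemma exists_firstSplit (L : List T.V) : ∀ {c a : T.V} (q : T.G.Walk c a), a ∈ L →
    ∃ p, p ∈ L ∧ ∃ (q1 : T.G.Walk c p) (q2 : T.G.Walk p a),
      q1.append q2 = q ∧ ∀ z ∈ q1.support, z ∈ L → z = p := by
  intro c a q
  induction q with
  | nil =>
    intro ha
    exact ⟨_, ha, Walk.nil, Walk.nil, rfl, by intro z hz _; simpa using hz⟩
  | @cons c d a h r ih =>
    intro ha
    by_cases hc : c ∈ L
    · exact ⟨c, hc, Walk.nil, Walk.cons h r, rfl, by intro z hz _; simpa using hz⟩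
    · obtain ⟨p, hp, q1, q2, heq, havoid⟩ := ih ha
      refine ⟨p, hp, Walk.cons h q1, q2, by rw [Walk.cons_append, heq], ?_⟩
      intro z hz hzL
      rw [Walk.support_cons] at hz
      rcases List.mem_cons.mp hz with rfl | hz'
      · exact absurd hzL hc
      · exact havoid z hz' hzL

lemma exists_med (a b c : T.V) :
    ∃ p, p ∈ (T.pp a b).support ∧ p ∈ (T.pp a c).support ∧ p ∈ (T.pp b c).support := by
  obtain ⟨p, hp, q1, q2, heq, havoid⟩ :=
    T.exists_firstSplit (T.pp a b).support (T.pp c a) (Walk.start_mem_support (T.pp a b))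
  have hq1path : q1.IsPath := by
    have : (q1.append q2).IsPath := by rw [heq]; exact T.pp_isPath c a
    exact this.of_append_left
  have hq1 : q1 = T.pp c p := T.pp_unique hq1path
  have hpca : p ∈ (T.pp c a).support := by
    rw [← heq, Walk.mem_support_append_iff]
    exact Or.inl (Walk.end_mem_support _)
  refine ⟨p, hp, T.mem_pp_symm hpca, ?_⟩
  -- build the path b → p → c
  have hd : ∀ z, z ∈ (T.pp b p).support → z ∈ (T.pp p c).support → z = p := by
    intro z hz1 hz2
    have hz1' : z ∈ (T.pp a b).support := by
      have hpab : p ∈ (T.pp b a).support := T.mem_pp_symm hp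
      have := T.supp_pp_sub_left hpab z hz1
      exact T.mem_pp_symm this
    have hz2' : z ∈ q1.support := by
      rw [hq1]
      exact T.mem_pp_symm hz2
    exact havoid z hz2' hz1'
  exact T.mem_pp_glue hd

/-- The median of three vertices. -/
noncomputable def med (a b c : T.V) : T.V := (T.exists_med a b c).choose

lemma med_mem₁ (a b c : T.V) : T.med a b c ∈ (T.pp a b).support :=
  (T.exists_med a b c).choose_spec.1

lemma med_mem₂ (a b c : T.V) : T.med a b c ∈ (T.pp a c).support :=
  (T.exists_med a b c).choose_spec.2.1

lemma med_mem₃ (a b c : T.V) : T.med a b c ∈ (T.pp b c).support :=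
  (T.exists_med a b c).choose_spec.2.2

lemma common_unique {a b c p q : T.V} (hab : a ≠ b) (hac : a ≠ c) (hbc : b ≠ c)
    (hp1 : p ∈ (T.pp a b).support) (hp2 : p ∈ (T.pp a c).support)
    (hp3 : p ∈ (T.pp b c).support)
    (hq1 : q ∈ (T.pp a b).support) (hq2 : q ∈ (T.pp a c).support)
    (hq3 : q ∈ (T.pp b c).support) : p = q := by
  by_contra hpq
  by_cases hpa : p = a
  · subst hpa
    have h1 : T.nxt p q = T.nxt p b := T.nxt_eq hq1 (Ne.symm hpq)
    have h2 : T.nxt p q = T.nxt p c := T.nxt_eq hq2 (Ne.symm hpq)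
    exact T.nxt_ne hp3 hab hac (h1 ▸ h2 ▸ rfl)
  by_cases hpb : p = b
  · subst hpb
    have h1 : T.nxt p q = T.nxt p a := T.nxt_eq (T.mem_pp_symm hq1) (Ne.symm hpq)
    have h2 : T.nxt p q = T.nxt p c := T.nxt_eq hq3 (Ne.symm hpq)
    exact T.nxt_ne hp2 (Ne.symm hab) hbc (h1 ▸ h2 ▸ rfl)
  by_cases hpc : p = c
  · subst hpc
    have h1 : T.nxt p q = T.nxt p a := T.nxt_eq (T.mem_pp_symm hq2) (Ne.symm hpq)
    have h2 : T.nxt p q = T.nxt p b := T.nxt_eq (T.mem_pp_symm hq3) (Ne.symm hpq)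
    exact T.nxt_ne hp1 (Ne.symm hac) (Ne.symm hbc) (h1 ▸ h2 ▸ rfl)
  · have nab : T.nxt p a ≠ T.nxt p b := T.nxt_ne hp1 hpa hpb
    have nac : T.nxt p a ≠ T.nxt p c := T.nxt_ne hp2 hpa hpc
    have nbc : T.nxt p b ≠ T.nxt p c := T.nxt_ne hp3 hpb hpc
    have e1 : T.nxt p q = T.nxt p a ∨ T.nxt p q = T.nxt p b := by
      rcases T.mem_pp_decomp hp1 hq1 with h' | h'
      · exact Or.inl (T.nxt_eq (T.mem_pp_symm h') (Ne.symm hpq))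
      · exact Or.inr (T.nxt_eq h' (Ne.symm hpq))
    have e2 : T.nxt p q = T.nxt p a ∨ T.nxt p q = T.nxt p c := by
      rcases T.mem_pp_decomp hp2 hq2 with h' | h'
      · exact Or.inl (T.nxt_eq (T.mem_pp_symm h') (Ne.symm hpq))
      · exact Or.inr (T.nxt_eq h' (Ne.symm hpq))
    have e3 : T.nxt p q = T.nxt p b ∨ T.nxt p q = T.nxt p c := by
      rcases T.mem_pp_decomp hp3 hq3 with h' | h'
      · exact Or.inl (T.nxt_eq (T.mem_pp_symm h') (Ne.symm hpq))
      · exact Or.inr (T.nxt_eq h' (Ne.symm hpq))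
    rcases e1 with e1 | e1 <;> rcases e2 with e2 | e2 <;> rcases e3 with e3 | e3 <;>
      first
      | exact nab (e1 ▸ e3 ▸ rfl)
      | exact nac (e1 ▸ e3 ▸ rfl)
      | exact nab (e1 ▸ e2 ▸ rfl)
      | exact nac (e1 ▸ e2 ▸ rfl)
      | exact nbc (e1 ▸ e2 ▸ rfl)
      | exact nbc (e2 ▸ e3 ▸ rfl)
      | exact nac (e2 ▸ e3 ▸ rfl)
      | exact nbc (e1 ▸ e3 ▸ rfl)

lemma med_eq {a b c p : T.V} (hab : a ≠ b) (hac : a ≠ c) (hbc : b ≠ c)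
    (hp1 : p ∈ (T.pp a b).support) (hp2 : p ∈ (T.pp a c).support)
    (hp3 : p ∈ (T.pp b c).support) : T.med a b c = p :=
  T.common_unique hab hac hbc (T.med_mem₁ a b c) (T.med_mem₂ a b c) (T.med_mem₃ a b c)
    hp1 hp2 hp3

/-- A vertex lies on the path between `a` and `b` as soon as the first steps
towards `a` and `b` differ. -/
lemma mem_pp_of_nxt_ne {v a b : T.V} (h : T.nxt v a ≠ T.nxt v b) :
    v ∈ (T.pp a b).support := by
  by_cases hva : v = a
  · subst hva; exact Walk.start_mem_support _
  by_cases hvb : v = b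
  · subst hvb; exact Walk.end_mem_support _
  have hd : ∀ z, z ∈ (T.pp a v).support → z ∈ (T.pp v b).support → z = v := by
    intro z hz1 hz2
    by_contra hzv
    have e1 : T.nxt v z = T.nxt v a := T.nxt_eq (T.mem_pp_symm hz1) hzv
    have e2 : T.nxt v z = T.nxt v b := T.nxt_eq hz2 hzv
    exact h (e1 ▸ e2 ▸ rfl)
  exact T.mem_pp_glue hd

lemma interior_deg3 {p u v : T.V} (h : p ∈ (T.pp u v).support) (hu : p ≠ u) (hv : p ≠ v) :
    T.G.degree p = 3 := by
  have hne := T.nxt_ne h hu hv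
  have h2 : ({T.nxt p u, T.nxt p v} : Finset T.V) ⊆ T.G.neighborFinset p := by
    intro z hz
    rw [Finset.mem_insert, Finset.mem_singleton] at hz
    rw [SimpleGraph.mem_neighborFinset]
    rcases hz with rfl | rfl
    · exact T.nxt_adj hu
    · exact T.nxt_adj hv
  have hcard : 2 ≤ T.G.degree p := by
    have := Finset.card_le_card h2
    rwa [Finset.card_pair hne] at this
  rcases T.deg13 p with h' | h'
  · omega
  · exact h'

lemma ne_of_deg3 {p : T.V} (h : T.G.degree p = 3) {x : N} : p ≠ T.leaf x := by
  intro he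
  rw [he, T.leaf_deg] at h
  omega

lemma med_deg3 {a b c : T.V} (hab : a ≠ b) (hac : a ≠ c) (hbc : b ≠ c)
    (ha : T.G.degree a = 1) (hb : T.G.degree b = 1) (hc : T.G.degree c = 1) :
    T.G.degree (T.med a b c) = 3 := by
  set p := T.med a b c with hp
  have hm1 : p ∈ (T.pp a b).support := T.med_mem₁ a b c
  have hm2 : p ∈ (T.pp a c).support := T.med_mem₂ a b c
  have hm3 : p ∈ (T.pp b c).support := T.med_mem₃ a b c
  by_cases hpa : p = a
  · have hd := T.interior_deg3 hm3 (by rw [hpa]; exact hab) (by rw [hpa]; exact hac)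
    rw [hpa] at hd
    omega
  by_cases hpb : p = b
  · have hd := T.interior_deg3 hm2 (by rw [hpb]; exact Ne.symm hab) (by rw [hpb]; exact hbc)
    rw [hpb] at hd
    omega
  · exact T.interior_deg3 hm1 hpa hpb

lemma nbr_eq {p c₁ c₂ c₃ : T.V} (hdeg : T.G.degree p = 3)
    (h1 : T.G.Adj p c₁) (h2 : T.G.Adj p c₂) (h3 : T.G.Adj p c₃)
    (h12 : c₁ ≠ c₂) (h13 : c₁ ≠ c₃) (h23 : c₂ ≠ c₃) :
    ∀ z, T.G.Adj p z → z = c₁ ∨ z = c₂ ∨ z = c₃ := by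
  intro z hz
  have hsub : ({c₁, c₂, c₃} : Finset T.V) ⊆ T.G.neighborFinset p := by
    intro w hw
    simp only [Finset.mem_insert, Finset.mem_singleton] at hw
    rw [SimpleGraph.mem_neighborFinset]
    rcases hw with rfl | rfl | rfl <;> assumption
  have hcard : ({c₁, c₂, c₃} : Finset T.V).card = 3 := by
    rw [Finset.card_insert_of_notMem (by simp [h12, h13]),
      Finset.card_insert_of_notMem (by simp [h23]), Finset.card_singleton]
  have heq : T.G.neighborFinset p = {c₁, c₂, c₃} :=
    (Finset.eq_of_subset_of_card_le hsub (by rw [hcard, ← hdeg]; rfl)).symm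
  have : z ∈ T.G.neighborFinset p := (SimpleGraph.mem_neighborFinset _ _ _).mpr hz
  rw [heq] at this
  simpa using this

lemma exists_third_nbr {p e₁ e₂ : T.V} (hdeg : T.G.degree p = 3)
    (h1 : T.G.Adj p e₁) (h2 : T.G.Adj p e₂) (h12 : e₁ ≠ e₂) :
    ∃ e₃, T.G.Adj p e₃ ∧ e₃ ≠ e₁ ∧ e₃ ≠ e₂ := by
  by_contra hcon
  push_neg at hcon
  have hsub : T.G.neighborFinset p ⊆ {e₁, e₂} := by
    intro z hz
    rw [SimpleGraph.mem_neighborFinset] at hz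
    by_cases hz1 : z = e₁
    · simp [hz1]
    by_cases hz2 : z = e₂
    · simp [hz2]
    · exact absurd hz2 (fun h => h (hcon z hz hz1))
  have := Finset.card_le_card hsub
  have h2' : ({e₁, e₂} : Finset T.V).card ≤ 2 := Finset.card_insert_le _ _ |>.trans (by simp)
  rw [SimpleGraph.card_neighborFinset_eq_degree, hdeg] at this
  omega

lemma nbrs_classify {p A B z z' : T.V} (hdeg : T.G.degree p = 3)
    (hA : T.G.Adj p A) (hB : T.G.Adj p B) (hAB : A ≠ B)
    (hz : T.G.Adj p z) (hzA : z ≠ A) (hzB : z ≠ B)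
    (hz' : T.G.Adj p z') (hz'A : z' ≠ A) (hz'B : z' ≠ B) : z = z' := by
  obtain ⟨e₃, he₃, he₃A, he₃B⟩ := T.exists_third_nbr hdeg hA hB hAB
  have c1 := T.nbr_eq hdeg hA hB he₃ hAB (Ne.symm he₃A) (Ne.symm he₃B) z hz
  have c2 := T.nbr_eq hdeg hA hB he₃ hAB (Ne.symm he₃A) (Ne.symm he₃B) z' hz'
  rcases c1 with rfl | rfl | rfl
  · exact absurd rfl hzA
  · exact absurd rfl hzB
  · rcases c2 with rfl | rfl | rfl
    · exact absurd rfl hz'A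
    · exact absurd rfl hz'B
    · rfl

lemma adj_nxt_eq {p u : T.V} (h : T.G.Adj p u) : T.nxt p u = u := by
  have hpath : (Walk.cons h Walk.nil).IsPath := by simp [T.G.ne_of_adj h]
  have := T.pp_unique hpath
  unfold nxt
  rw [← this]
  rfl

lemma adj_of_pp_length_one {p u : T.V} (h : (T.pp p u).length = 1) : T.G.Adj p u := by
  have := Walk.adj_getVert_succ (T.pp p u) (i := 0) (by omega)
  rw [Walk.getVert_zero] at this
  have h1 : (T.pp p u).getVert 1 = u := by
    rw [← h]; exact Walk.getVert_length _
  rwa [h1] at this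

lemma edge_isPath {a b : T.V} (h : T.G.Adj a b) : (Walk.cons h Walk.nil).IsPath := by
  rw [Walk.cons_isPath_iff]
  exact ⟨Walk.IsPath.nil, by simp [T.G.ne_of_adj h]⟩

lemma reach_leaf : ∀ (k : ℕ) {v w : T.V} (p : T.G.Walk v w), p.IsPath → 1 ≤ p.length →
    Fintype.card T.V ≤ p.length + k →
    ∃ (x : T.V) (q : T.G.Walk v x), q.IsPath ∧ T.G.degree x = 1 ∧ 1 ≤ q.length ∧
      q.getVert 1 = p.getVert 1 := by
  intro k
  induction k with
  | zero =>
    intro v w p hp _ hcard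
    exact absurd hp.length_lt (by omega)
  | succ k ih =>
    intro v w p hp hlen hcard
    rcases T.deg13 w with hw | hw
    · exact ⟨w, p, hp, hw, hlen, rfl⟩
    · have hfresh : ∃ y, T.G.Adj w y ∧ y ∉ p.support := by
        by_contra hcon
        push_neg at hcon
        have key : ∀ y (hadj : T.G.Adj w y) (hy : y ∈ p.support),
            y = p.getVert (p.length - 1) := by
          intro y hadj hy
          have hdrop : p.dropUntil y hy = Walk.cons hadj.symm Walk.nil := by
            have e1 : p.dropUntil y hy = T.pp y w := T.pp_unique (hp.dropUntil hy)
            have e2 : Walk.cons hadj.symm Walk.nil = T.pp y w :=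
              T.pp_unique (T.edge_isPath hadj.symm)
            rw [e1, e2]
          have hlen1 : (p.dropUntil y hy).length = 1 := by rw [hdrop]; simp
          have hspec := Walk.take_spec p hy
          have hlen2 : (p.takeUntil y hy).length + 1 = p.length := by
            have := congrArg Walk.length hspec
            rw [Walk.length_append, hlen1] at this
            omega
          have hkey : ((p.takeUntil y hy).append (p.dropUntil y hy)).getVert
              ((p.takeUntil y hy).length) = p.getVert ((p.takeUntil y hy).length) := by
            rw [hspec]
          rw [Walk.getVert_append, if_neg (lt_irrefl _), Nat.sub_self,
            Walk.getVert_zero] at hkey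
          have hidx : (p.takeUntil y hy).length = p.length - 1 := by omega
          rw [hidx] at hkey
          exact hkey
        have h1 : 1 < (T.G.neighborFinset w).card := by
          rw [SimpleGraph.card_neighborFinset_eq_degree, hw]; omega
        obtain ⟨y₁, hy₁, y₂, hy₂, hne⟩ := Finset.one_lt_card.mp h1
        rw [SimpleGraph.mem_neighborFinset] at hy₁ hy₂
        have e1 := key y₁ hy₁ (hcon _ hy₁)
        have e2 := key y₂ hy₂ (hcon _ hy₂)
        exact hne (e1.trans e2.symm)
      obtain ⟨y, hadj, hy⟩ := hfresh
      have hpath : (p.append (Walk.cons hadj Walk.nil)).IsPath := by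
        apply T.append_isPath hp (T.edge_isPath hadj)
        intro z hz hz'
        simp only [Walk.support_cons, Walk.support_nil] at hz'
        rcases List.mem_cons.mp hz' with rfl | hz''
        · rfl
        · simp only [List.mem_singleton] at hz''
          subst hz''
          exact absurd hz hy
      have hgv : (p.append (Walk.cons hadj Walk.nil)).getVert 1 = p.getVert 1 := by
        rw [Walk.getVert_append]
        by_cases h1 : 1 < p.length
        · rw [if_pos h1]
        · have hpl : p.length = 1 := by omega
          rw [if_neg h1, hpl]
          simp [← hpl, Walk.getVert_length]
      obtain ⟨x, q, hq, hdx, hlq, hgq⟩ := ih (p.append (Walk.cons hadj Walk.nil)) hpath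
        (by rw [Walk.length_append]; omega)
        (by rw [Walk.length_append]; simp only [Walk.length_cons, Walk.length_nil]; omega)
      exact ⟨x, q, hq, hdx, hlq, by rw [hgq, hgv]⟩

lemma exists_leaf_dir {v c : T.V} (h : T.G.Adj v c) :
    ∃ x, T.G.degree x = 1 ∧ x ≠ v ∧ T.nxt v x = c := by
  obtain ⟨x, q, hq, hdx, hlq, hgq⟩ := T.reach_leaf (Fintype.card T.V)
    (Walk.cons h Walk.nil) (T.edge_isPath h) (by simp) (by simp)
  have hxv : x ≠ v := by
    rintro rfl
    rw [Walk.isPath_iff_eq_nil] at hq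
    rw [hq] at hlq
    simp at hlq
  have hqpp : q = T.pp v x := T.pp_unique hq
  refine ⟨x, hdx, hxv, ?_⟩
  unfold nxt
  rw [← hqpp, hgq]
  rfl

lemma exists_rep {v : T.V} (h3 : T.G.degree v = 3) :
    ∃ t : N × N × N, t.1 ≠ t.2.1 ∧ t.1 ≠ t.2.2 ∧ t.2.1 ≠ t.2.2 ∧
      T.med (T.leaf t.1) (T.leaf t.2.1) (T.leaf t.2.2) = v := by
  have hcard : (T.G.neighborFinset v).card = 3 := by
    rw [SimpleGraph.card_neighborFinset_eq_degree]; exact h3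
  obtain ⟨c₁, c₂, c₃, h12, h13, h23, hset⟩ := Finset.card_eq_three.mp hcard
  have hadj : ∀ c ∈ ({c₁, c₂, c₃} : Finset T.V), T.G.Adj v c := by
    intro c hc
    rw [← hset, SimpleGraph.mem_neighborFinset] at hc
    exact hc
  obtain ⟨x₁, hd₁, hx₁v, hn₁⟩ := T.exists_leaf_dir (hadj c₁ (by simp))
  obtain ⟨x₂, hd₂, hx₂v, hn₂⟩ := T.exists_leaf_dir (hadj c₂ (by simp))
  obtain ⟨x₃, hd₃, hx₃v, hn₃⟩ := T.exists_leaf_dir (hadj c₃ (by simp))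
  obtain ⟨a, ha⟩ := T.leaf_surj x₁ hd₁
  obtain ⟨b, hb⟩ := T.leaf_surj x₂ hd₂
  obtain ⟨c, hc⟩ := T.leaf_surj x₃ hd₃
  have hx12 : x₁ ≠ x₂ := fun he => h12 (by rw [← hn₁, ← hn₂, he])
  have hx13 : x₁ ≠ x₃ := fun he => h13 (by rw [← hn₁, ← hn₃, he])
  have hx23 : x₂ ≠ x₃ := fun he => h23 (by rw [← hn₂, ← hn₃, he])
  have g1 : a ≠ b := fun he => hx12 (by rw [← ha, ← hb, he])
  have g2 : a ≠ c := fun he => hx13 (by rw [← ha, ← hc, he])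
  have g3 : b ≠ c := fun he => hx23 (by rw [← hb, ← hc, he])
  refine ⟨(a, b, c), g1, g2, g3, ?_⟩
  show T.med (T.leaf a) (T.leaf b) (T.leaf c) = v
  rw [ha, hb, hc]
  exact T.med_eq hx12 hx13 hx23
    (T.mem_pp_of_nxt_ne (by rw [hn₁, hn₂]; exact h12))
    (T.mem_pp_of_nxt_ne (by rw [hn₁, hn₃]; exact h13))
    (T.mem_pp_of_nxt_ne (by rw [hn₂, hn₃]; exact h23))

lemma not_mem_both {p q y : T.V} (hpq : p ≠ q) (h1 : q ∈ (T.pp p y).support)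
    (h2 : p ∈ (T.pp q y).support) : False := by
  have hnodup := (T.pp_isPath p y).support_nodup
  rw [T.pp_decomp h1, Walk.support_append, List.nodup_append] at hnodup
  apply hnodup.2.2 _ (Walk.start_mem_support (T.pp p q)) _ ?_ rfl
  rw [(T.pp q y).support_eq_cons] at h2
  rcases List.mem_cons.mp h2 with h' | h'
  · exact absurd h' hpq
  · exact h'

lemma exists_ne_ne [Fintype N] (h4 : 4 ≤ Fintype.card N) (x y : N) : ∃ z : N, z ≠ x ∧ z ≠ y := by
  classical
  by_contra hcon
  push_neg at hcon
  have hsub : (Finset.univ : Finset N) ⊆ {x, y} := by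
    intro z _
    by_cases hz : z = x
    · simp [hz]
    · simp [hcon z hz]
  have h1 := Finset.card_le_card hsub
  have h2 : ({x, y} : Finset N).card ≤ 2 := (Finset.card_insert_le _ _).trans (by simp)
  rw [Finset.card_univ] at h1
  omega

lemma leaf_not_adj [Fintype N] (h4 : 4 ≤ Fintype.card N) {x y : N} (hxy : x ≠ y) :
    ¬ T.G.Adj (T.leaf x) (T.leaf y) := by
  intro hadj
  obtain ⟨z, hzx, hzy⟩ := exists_ne_ne h4 x y
  have hpp : T.pp (T.leaf x) (T.leaf y) = Walk.cons hadj Walk.nil :=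
    (T.pp_unique (T.edge_isPath hadj)).symm
  have hm := T.med_mem₁ (T.leaf x) (T.leaf y) (T.leaf z)
  rw [hpp] at hm
  have hdeg := T.med_deg3 (T.leaf_inj.ne hxy) (T.leaf_inj.ne (Ne.symm hzx))
    (T.leaf_inj.ne (Ne.symm hzy)) (T.leaf_deg x) (T.leaf_deg y) (T.leaf_deg z)
  simp only [Walk.support_cons, Walk.support_nil] at hm
  rcases List.mem_cons.mp hm with h' | h'
  · exact T.ne_of_deg3 hdeg h'
  · simp only [List.mem_singleton] at h'
    exact T.ne_of_deg3 hdeg h'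
lemma mem_pp_triangle {a b z : T.V} (m : T.V) (hz : z ∈ (T.pp a b).support) :
    z ∈ (T.pp a m).support ∨ z ∈ (T.pp m b).support := by
  have hbp : ((T.pp a m).append (T.pp m b)).bypass.IsPath := Walk.bypass_isPath _
  have heq := T.pp_unique hbp
  rw [← heq] at hz
  have := Walk.support_bypass_subset _ hz
  rwa [Walk.mem_support_append_iff] at this

lemma aux_cons {a b c d m m' : T.V}
    (hmab : m ∈ (T.pp a b).support) (hm'ab : m' ∈ (T.pp a b).support)
    (hmbc : m ∈ (T.pp b c).support)
    (hm'ad : m' ∈ (T.pp a d).support)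
    (hdisj : ∀ z, z ∈ (T.pp a b).support → z ∉ (T.pp c d).support)
    (hmm' : m ≠ m') (hcase : m ∈ (T.pp a m').support)
    (hmb : m ≠ b) (hmc : m ≠ c) (hmd : m ≠ d)
    (hm'a : m' ≠ a) (hm'd : m' ≠ d) : False := by
  have hm'mb : m' ∈ (T.pp m b).support := by
    rcases T.mem_pp_decomp hmab hm'ab with h' | h'
    · exact absurd (T.pp_antisymm hcase h') hmm'
    · exact h'
  have e1 : T.nxt m m' = T.nxt m b := T.nxt_eq hm'mb (Ne.symm hmm')
  have hm'md : m' ∈ (T.pp m d).support := by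
    apply T.mem_pp_glue
    intro z hz1 hz2
    by_contra hzm'
    have hz1'' : z ∈ (T.pp m' a).support :=
      T.supp_pp_sub_left (T.mem_pp_symm hcase) z (T.mem_pp_symm hz1)
    have q1 : T.nxt m' z = T.nxt m' a := T.nxt_eq hz1'' hzm'
    have q2 : T.nxt m' z = T.nxt m' d := T.nxt_eq hz2 hzm'
    exact T.nxt_ne hm'ad hm'a hm'd (q1 ▸ q2 ▸ rfl)
  have e2 : T.nxt m m' = T.nxt m d := T.nxt_eq hm'md (Ne.symm hmm')
  have hj1 : T.med c d m ∈ (T.pp c d).support := T.med_mem₁ _ _ _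
  have hj2 : T.med c d m ∈ (T.pp c m).support := T.med_mem₂ _ _ _
  have hj3 : T.med c d m ∈ (T.pp d m).support := T.med_mem₃ _ _ _
  by_cases hjm : T.med c d m = m
  · exact hdisj m hmab (hjm ▸ hj1)
  · have f1 : T.nxt m (T.med c d m) = T.nxt m c := T.nxt_eq (T.mem_pp_symm hj2) hjm
    have f2 : T.nxt m (T.med c d m) = T.nxt m d := T.nxt_eq (T.mem_pp_symm hj3) hjm
    rw [e1] at e2
    rw [f1] at f2
    exact T.nxt_ne hmbc hmb hmc (e2.trans f2.symm)

lemma consistent_iff_med {u v w x : N} (huv : u ≠ v) (huw : u ≠ w) (hux : u ≠ x)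
    (hvw : v ≠ w) (hvx : v ≠ x) (hwx : w ≠ x) :
    T.Consistent u v w x ↔
      T.med (T.leaf u) (T.leaf v) (T.leaf w) = T.med (T.leaf u) (T.leaf v) (T.leaf x) := by
  have luv := T.leaf_inj.ne huv
  have luw := T.leaf_inj.ne huw
  have lux := T.leaf_inj.ne hux
  have lvw := T.leaf_inj.ne hvw
  have lvx := T.leaf_inj.ne hvx
  have lwx := T.leaf_inj.ne hwx
  constructor
  · rintro ⟨p0, q0, hp0, hq0, hdisj0⟩
    have hp0e : p0 = T.pp (T.leaf u) (T.leaf v) := T.pp_unique hp0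
    have hq0e : q0 = T.pp (T.leaf w) (T.leaf x) := T.pp_unique hq0
    rw [hp0e, hq0e] at hdisj0
    by_contra hne
    set m := T.med (T.leaf u) (T.leaf v) (T.leaf w) with hm
    set m' := T.med (T.leaf u) (T.leaf v) (T.leaf x) with hm'
    have hdm : T.G.degree m = 3 := T.med_deg3 luv luw lvw
      (T.leaf_deg u) (T.leaf_deg v) (T.leaf_deg w)
    have hdm' : T.G.degree m' = 3 := T.med_deg3 luv lux lvx
      (T.leaf_deg u) (T.leaf_deg v) (T.leaf_deg x)
    rcases T.mem_pp_decomp (T.med_mem₁ (T.leaf u) (T.leaf v) (T.leaf x))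
        (T.med_mem₁ (T.leaf u) (T.leaf v) (T.leaf w)) with hcase | hcase
    · exact T.aux_cons (T.med_mem₁ _ _ _) (T.med_mem₁ _ _ _)
        (T.med_mem₃ (T.leaf u) (T.leaf v) (T.leaf w))
        (T.med_mem₂ (T.leaf u) (T.leaf v) (T.leaf x)) hdisj0 hne hcase
        (T.ne_of_deg3 hdm) (T.ne_of_deg3 hdm) (T.ne_of_deg3 hdm)
        (T.ne_of_deg3 hdm') (T.ne_of_deg3 hdm')
    · apply T.aux_cons (T.mem_pp_symm (T.med_mem₁ (T.leaf u) (T.leaf v) (T.leaf w)))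
        (T.mem_pp_symm (T.med_mem₁ (T.leaf u) (T.leaf v) (T.leaf x)))
        (T.med_mem₂ (T.leaf u) (T.leaf v) (T.leaf w))
        (T.med_mem₃ (T.leaf u) (T.leaf v) (T.leaf x))
        (fun z hz => hdisj0 z (T.mem_pp_symm hz)) hne (T.mem_pp_symm hcase)
        (T.ne_of_deg3 hdm) (T.ne_of_deg3 hdm) (T.ne_of_deg3 hdm)
        (T.ne_of_deg3 hdm') (T.ne_of_deg3 hdm')
  · intro heq
    set p := T.med (T.leaf u) (T.leaf v) (T.leaf w) with hpdef
    have hdeg : T.G.degree p = 3 := T.med_deg3 luv luw lvw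
      (T.leaf_deg u) (T.leaf_deg v) (T.leaf_deg w)
    have hp1 : p ∈ (T.pp (T.leaf u) (T.leaf v)).support := T.med_mem₁ _ _ _
    have hp2 : p ∈ (T.pp (T.leaf u) (T.leaf w)).support := T.med_mem₂ _ _ _
    have hp3 : p ∈ (T.pp (T.leaf v) (T.leaf w)).support := T.med_mem₃ _ _ _
    have hq2 : p ∈ (T.pp (T.leaf u) (T.leaf x)).support := by
      rw [heq]; exact T.med_mem₂ _ _ _
    have hq3 : p ∈ (T.pp (T.leaf v) (T.leaf x)).support := by
      rw [heq]; exact T.med_mem₃ _ _ _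
    have hpu : p ≠ T.leaf u := T.ne_of_deg3 hdeg
    have hpv : p ≠ T.leaf v := T.ne_of_deg3 hdeg
    have hpw : p ≠ T.leaf w := T.ne_of_deg3 hdeg
    have hpx : p ≠ T.leaf x := T.ne_of_deg3 hdeg
    have ncu_cv : T.nxt p (T.leaf u) ≠ T.nxt p (T.leaf v) := T.nxt_ne hp1 hpu hpv
    have ncu_cw : T.nxt p (T.leaf u) ≠ T.nxt p (T.leaf w) := T.nxt_ne hp2 hpu hpw
    have ncv_cw : T.nxt p (T.leaf v) ≠ T.nxt p (T.leaf w) := T.nxt_ne hp3 hpv hpw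
    have ncu_cx : T.nxt p (T.leaf u) ≠ T.nxt p (T.leaf x) := T.nxt_ne hq2 hpu hpx
    have ncv_cx : T.nxt p (T.leaf v) ≠ T.nxt p (T.leaf x) := T.nxt_ne hq3 hpv hpx
    have hcwcx : T.nxt p (T.leaf w) = T.nxt p (T.leaf x) :=
      T.nbrs_classify hdeg (T.nxt_adj hpu) (T.nxt_adj hpv) ncu_cv
        (T.nxt_adj hpw) (Ne.symm ncu_cw) (Ne.symm ncv_cw)
        (T.nxt_adj hpx) (Ne.symm ncu_cx) (Ne.symm ncv_cx)
    have hpnotwx : p ∉ (T.pp (T.leaf w) (T.leaf x)).support := by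
      intro hmem
      exact T.nxt_ne hmem hpw hpx hcwcx
    refine ⟨T.pp (T.leaf u) (T.leaf v), T.pp (T.leaf w) (T.leaf x),
      T.pp_isPath _ _, T.pp_isPath _ _, ?_⟩
    intro z hz hz'
    have hzp : z ≠ p := fun he => hpnotwx (he ▸ hz')
    have huvside : T.nxt p z = T.nxt p (T.leaf u) ∨ T.nxt p z = T.nxt p (T.leaf v) := by
      rcases T.mem_pp_decomp hp1 hz with h' | h'
      · exact Or.inl (T.nxt_eq (T.mem_pp_symm h') hzp)
      · exact Or.inr (T.nxt_eq h' hzp)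
    have hwxside : T.nxt p z = T.nxt p (T.leaf w) := by
      rcases T.mem_pp_triangle p hz' with h' | h'
      · exact T.nxt_eq (T.mem_pp_symm h') hzp
      · rw [hcwcx]; exact T.nxt_eq h' hzp
    rcases huvside with h' | h'
    · exact ncu_cw (h' ▸ hwxside)
    · exact ncv_cw (h' ▸ hwxside)
lemma consistent_symm_pairs {u v w x : N} (h : T.Consistent u v w x) :
    T.Consistent w x u v := by
  obtain ⟨p, q, hp, hq, hd⟩ := h
  exact ⟨q, p, hq, hp, fun a haq hap => hd a hap haq⟩

lemma consistent_symm_uv {u v w x : N} (h : T.Consistent u v w x) :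
    T.Consistent v u w x := by
  obtain ⟨p, q, hp, hq, hd⟩ := h
  refine ⟨p.reverse, q, hp.reverse, hq, fun a ha => ?_⟩
  rw [Walk.support_reverse, List.mem_reverse] at ha
  exact hd a ha

lemma consistent_symm_wx {u v w x : N} (h : T.Consistent u v w x) :
    T.Consistent u v x w := by
  obtain ⟨p, q, hp, hq, hd⟩ := h
  refine ⟨p, q.reverse, hp, hq.reverse, fun a ha hq' => ?_⟩
  rw [Walk.support_reverse, List.mem_reverse] at hq'
  exact hd a ha hq'

lemma mem_QT_iff {u v w x : N} (huv : u ≠ v) (huw : u ≠ w) (hux : u ≠ x)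
    (hvw : v ≠ w) (hvx : v ≠ x) (hwx : w ≠ x) :
    s(s(u,v),s(w,x)) ∈ T.QT ↔ T.Consistent u v w x := by
  constructor
  · rintro ⟨u', v', w', x', _, _, _, _, _, _, heq, hcons⟩
    rcases Sym2.eq_iff.mp heq with ⟨h1, h2⟩ | ⟨h1, h2⟩
    · rcases Sym2.eq_iff.mp h1 with ⟨rfl, rfl⟩ | ⟨rfl, rfl⟩ <;>
        rcases Sym2.eq_iff.mp h2 with ⟨rfl, rfl⟩ | ⟨rfl, rfl⟩
      · exact hcons
      · exact T.consistent_symm_wx hcons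
      · exact T.consistent_symm_uv hcons
      · exact T.consistent_symm_uv (T.consistent_symm_wx hcons)
    · rcases Sym2.eq_iff.mp h1 with ⟨rfl, rfl⟩ | ⟨rfl, rfl⟩ <;>
        rcases Sym2.eq_iff.mp h2 with ⟨rfl, rfl⟩ | ⟨rfl, rfl⟩
      · exact T.consistent_symm_pairs hcons
      · exact T.consistent_symm_wx (T.consistent_symm_pairs hcons)
      · exact T.consistent_symm_uv (T.consistent_symm_pairs hcons)
      · exact T.consistent_symm_wx (T.consistent_symm_uv (T.consistent_symm_pairs hcons))
  · intro hcons
    exact ⟨u, v, w, x, huv, huw, hux, hvw, hvx, hwx, rfl, hcons⟩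

lemma med_perm_rot {a b c : T.V} (hab : a ≠ b) (hac : a ≠ c) (hbc : b ≠ c) :
    T.med b c a = T.med a b c :=
  T.med_eq hbc (Ne.symm hab) (Ne.symm hac) (T.med_mem₃ a b c)
    (T.mem_pp_symm (T.med_mem₁ a b c)) (T.mem_pp_symm (T.med_mem₂ a b c))

lemma med_perm_swap {a b c : T.V} (hab : a ≠ b) (hac : a ≠ c) (hbc : b ≠ c) :
    T.med a c b = T.med a b c :=
  T.med_eq hac hab (Ne.symm hbc) (T.med_mem₂ a b c) (T.med_mem₁ a b c)
    (T.mem_pp_symm (T.med_mem₃ a b c))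

/-- One step of the replacement chain. -/
def Step (T : TernaryTree N) (s t o₁ o₂ : N) : Prop :=
  t = s ∨ (t ≠ s ∧ t ≠ o₁ ∧ t ≠ o₂ ∧ T.Consistent o₁ o₂ s t)

lemma step_iff {a b c t : N} (hab : a ≠ b) (hac : a ≠ c) (hbc : b ≠ c) :
    T.Step a t b c ↔
      T.med (T.leaf t) (T.leaf b) (T.leaf c) = T.med (T.leaf a) (T.leaf b) (T.leaf c) := by
  have lab := T.leaf_inj.ne hab
  have lac := T.leaf_inj.ne hac
  have lbc := T.leaf_inj.ne hbc
  constructor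
  · rintro (rfl | ⟨hta, htb, htc, hcons⟩)
    · rfl
    · have hmm := (T.consistent_iff_med hbc (Ne.symm hab) (Ne.symm htb)
        (Ne.symm hac) (Ne.symm htc) (Ne.symm hta)).mp hcons
      have ltb := T.leaf_inj.ne htb
      have ltc := T.leaf_inj.ne htc
      calc T.med (T.leaf t) (T.leaf b) (T.leaf c)
          = T.med (T.leaf b) (T.leaf c) (T.leaf t) := (T.med_perm_rot ltb ltc lbc).symm
        _ = T.med (T.leaf b) (T.leaf c) (T.leaf a) := hmm.symm
        _ = T.med (T.leaf a) (T.leaf b) (T.leaf c) := T.med_perm_rot lab lac lbc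
  · intro heq
    by_cases hta : t = a
    · exact Or.inl hta
    · have hdeg : T.G.degree (T.med (T.leaf a) (T.leaf b) (T.leaf c)) = 3 :=
        T.med_deg3 lab lac lbc (T.leaf_deg a) (T.leaf_deg b) (T.leaf_deg c)
      have htb : t ≠ b := by
        rintro rfl
        have hm := T.med_mem₁ (T.leaf t) (T.leaf t) (T.leaf c)
        rw [T.pp_self, Walk.support_nil] at hm
        simp only [List.mem_singleton] at hm
        rw [heq] at hm
        exact T.ne_of_deg3 hdeg hm
      have htc : t ≠ c := by
        rintro rfl
        have hm := T.med_mem₂ (T.leaf t) (T.leaf b) (T.leaf t)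
        rw [T.pp_self, Walk.support_nil] at hm
        simp only [List.mem_singleton] at hm
        rw [heq] at hm
        exact T.ne_of_deg3 hdeg hm
      have ltb := T.leaf_inj.ne htb
      have ltc := T.leaf_inj.ne htc
      refine Or.inr ⟨hta, htb, htc, ?_⟩
      apply (T.consistent_iff_med hbc (Ne.symm hab) (Ne.symm htb)
        (Ne.symm hac) (Ne.symm htc) (Ne.symm hta)).mpr
      calc T.med (T.leaf b) (T.leaf c) (T.leaf a)
          = T.med (T.leaf a) (T.leaf b) (T.leaf c) := T.med_perm_rot lab lac lbc
        _ = T.med (T.leaf t) (T.leaf b) (T.leaf c) := heq.symm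
        _ = T.med (T.leaf b) (T.leaf c) (T.leaf t) := (T.med_perm_rot ltb ltc lbc).symm
lemma med_perm_rot2 {a b c : T.V} (hab : a ≠ b) (hac : a ≠ c) (hbc : b ≠ c) :
    T.med c a b = T.med a b c := by
  have e1 : T.med c a b = T.med b c a := T.med_perm_rot hbc (Ne.symm hab) (Ne.symm hac)
  rw [e1]
  exact T.med_perm_rot hab hac hbc

lemma med_perm_swap12 {a b c : T.V} (hab : a ≠ b) (hac : a ≠ c) (hbc : b ≠ c) :
    T.med b a c = T.med a b c := by
  have e1 : T.med b a c = T.med b c a := T.med_perm_swap hbc (Ne.symm hab) (Ne.symm hac)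
  rw [e1]
  exact T.med_perm_rot hab hac hbc

lemma med_perm_swap13 {a b c : T.V} (hab : a ≠ b) (hac : a ≠ c) (hbc : b ≠ c) :
    T.med c b a = T.med a b c := by
  have e1 : T.med c b a = T.med c a b := T.med_perm_swap (Ne.symm hac) (Ne.symm hbc) hab
  rw [e1]
  exact T.med_perm_rot2 hab hac hbc

/-- Three labels forming a permutation of another triple. -/
def Perm3 {N : Type} (x₁ x₂ x₃ a b c : N) : Prop :=
  (x₁ = a ∧ x₂ = b ∧ x₃ = c) ∨ (x₁ = a ∧ x₂ = c ∧ x₃ = b) ∨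
  (x₁ = b ∧ x₂ = a ∧ x₃ = c) ∨ (x₁ = b ∧ x₂ = c ∧ x₃ = a) ∨
  (x₁ = c ∧ x₂ = a ∧ x₃ = b) ∨ (x₁ = c ∧ x₂ = b ∧ x₃ = a)

lemma steps_of_aligned {a b c x₁ x₂ x₃ : N} {p : T.V}
    (hab : a ≠ b) (hac : a ≠ c) (hbc : b ≠ c)
    (hp : T.med (T.leaf a) (T.leaf b) (T.leaf c) = p)
    (h1 : T.nxt p (T.leaf x₁) = T.nxt p (T.leaf a))
    (h2 : T.nxt p (T.leaf x₂) = T.nxt p (T.leaf b))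
    (h3 : T.nxt p (T.leaf x₃) = T.nxt p (T.leaf c)) :
    T.Step a x₁ b c ∧ T.Step b x₂ x₁ c ∧ T.Step c x₃ x₁ x₂ := by
  have lab := T.leaf_inj.ne hab
  have lac := T.leaf_inj.ne hac
  have lbc := T.leaf_inj.ne hbc
  have hdeg : T.G.degree p = 3 := by
    rw [← hp]
    exact T.med_deg3 lab lac lbc (T.leaf_deg a) (T.leaf_deg b) (T.leaf_deg c)
  have hp1 : p ∈ (T.pp (T.leaf a) (T.leaf b)).support := hp ▸ T.med_mem₁ _ _ _
  have hp2 : p ∈ (T.pp (T.leaf a) (T.leaf c)).support := hp ▸ T.med_mem₂ _ _ _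
  have hp3 : p ∈ (T.pp (T.leaf b) (T.leaf c)).support := hp ▸ T.med_mem₃ _ _ _
  have nab : T.nxt p (T.leaf a) ≠ T.nxt p (T.leaf b) :=
    T.nxt_ne hp1 (T.ne_of_deg3 hdeg) (T.ne_of_deg3 hdeg)
  have nac : T.nxt p (T.leaf a) ≠ T.nxt p (T.leaf c) :=
    T.nxt_ne hp2 (T.ne_of_deg3 hdeg) (T.ne_of_deg3 hdeg)
  have nbc : T.nxt p (T.leaf b) ≠ T.nxt p (T.leaf c) :=
    T.nxt_ne hp3 (T.ne_of_deg3 hdeg) (T.ne_of_deg3 hdeg)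
  have hlne : ∀ {y z : N}, T.nxt p (T.leaf y) ≠ T.nxt p (T.leaf z) → y ≠ z :=
    fun hne he => hne (by rw [he])
  have hx1b : x₁ ≠ b := hlne (by rw [h1]; exact nab)
  have hx1c : x₁ ≠ c := hlne (by rw [h1]; exact nac)
  have hx2x1 : x₂ ≠ x₁ := hlne (by rw [h1, h2]; exact Ne.symm nab)
  have hx2c : x₂ ≠ c := hlne (by rw [h2]; exact nbc)
  have hx3x1 : x₃ ≠ x₁ := hlne (by rw [h1, h3]; exact Ne.symm nac)
  have hx3x2 : x₃ ≠ x₂ := hlne (by rw [h2, h3]; exact Ne.symm nbc)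
  have m_bc_a : T.med (T.leaf b) (T.leaf c) (T.leaf a) = p :=
    T.med_eq lbc (Ne.symm lab) (Ne.symm lac) hp3 (T.mem_pp_symm hp1) (T.mem_pp_symm hp2)
  refine ⟨?_, ?_, ?_⟩
  · by_cases hx1a : x₁ = a
    · exact Or.inl hx1a
    · refine Or.inr ⟨hx1a, hx1b, hx1c, ?_⟩
      apply (T.consistent_iff_med hbc (Ne.symm hab) (Ne.symm hx1b)
        (Ne.symm hac) (Ne.symm hx1c) (fun he => hx1a he.symm)).mpr
      rw [m_bc_a]
      symm
      exact T.med_eq lbc (T.leaf_inj.ne (Ne.symm hx1b)) (T.leaf_inj.ne (Ne.symm hx1c))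
        hp3 (T.mem_pp_of_nxt_ne (by rw [h1]; exact Ne.symm nab))
        (T.mem_pp_of_nxt_ne (by rw [h1]; exact Ne.symm nac))
  · by_cases hx2b : x₂ = b
    · exact Or.inl hx2b
    · refine Or.inr ⟨hx2b, hx2x1, hx2c, ?_⟩
      apply (T.consistent_iff_med hx1c hx1b (Ne.symm hx2x1)
        (Ne.symm hbc) (Ne.symm hx2c) (fun he => hx2b he.symm)).mpr
      have e1 : T.med (T.leaf x₁) (T.leaf c) (T.leaf b) = p :=
        T.med_eq (T.leaf_inj.ne hx1c) (T.leaf_inj.ne hx1b) (Ne.symm lbc)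
          (T.mem_pp_of_nxt_ne (by rw [h1]; exact nac))
          (T.mem_pp_of_nxt_ne (by rw [h1]; exact nab))
          (T.mem_pp_symm hp3)
      have e2 : T.med (T.leaf x₁) (T.leaf c) (T.leaf x₂) = p :=
        T.med_eq (T.leaf_inj.ne hx1c) (T.leaf_inj.ne (Ne.symm hx2x1))
          (T.leaf_inj.ne (Ne.symm hx2c))
          (T.mem_pp_of_nxt_ne (by rw [h1]; exact nac))
          (T.mem_pp_of_nxt_ne (by rw [h1, h2]; exact nab))
          (T.mem_pp_of_nxt_ne (by rw [h2]; exact Ne.symm nbc))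
      rw [e1, e2]
  · by_cases hx3c : x₃ = c
    · exact Or.inl hx3c
    · refine Or.inr ⟨hx3c, hx3x1, hx3x2, ?_⟩
      apply (T.consistent_iff_med (hlne (by rw [h1, h2]; exact nab)) hx1c
        (Ne.symm hx3x1) hx2c (Ne.symm hx3x2) (fun he => hx3c he.symm)).mpr
      have e1 : T.med (T.leaf x₁) (T.leaf x₂) (T.leaf c) = p :=
        T.med_eq (T.leaf_inj.ne (hlne (by rw [h1, h2]; exact nab)))
          (T.leaf_inj.ne hx1c) (T.leaf_inj.ne hx2c)
          (T.mem_pp_of_nxt_ne (by rw [h1, h2]; exact nab))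
          (T.mem_pp_of_nxt_ne (by rw [h1]; exact nac))
          (T.mem_pp_of_nxt_ne (by rw [h2]; exact nbc))
      have e2 : T.med (T.leaf x₁) (T.leaf x₂) (T.leaf x₃) = p :=
        T.med_eq (T.leaf_inj.ne (hlne (by rw [h1, h2]; exact nab)))
          (T.leaf_inj.ne (Ne.symm hx3x1)) (T.leaf_inj.ne (Ne.symm hx3x2))
          (T.mem_pp_of_nxt_ne (by rw [h1, h2]; exact nab))
          (T.mem_pp_of_nxt_ne (by rw [h1, h3]; exact nac))
          (T.mem_pp_of_nxt_ne (by rw [h2, h3]; exact nbc))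
      rw [e1, e2]

lemma med_eq_iff_steps {a b c a' b' c' : N}
    (hab : a ≠ b) (hac : a ≠ c) (hbc : b ≠ c)
    (hab' : a' ≠ b') (hac' : a' ≠ c') (hbc' : b' ≠ c') :
    T.med (T.leaf a) (T.leaf b) (T.leaf c) = T.med (T.leaf a') (T.leaf b') (T.leaf c') ↔
      ∃ x₁ x₂ x₃ : N, Perm3 x₁ x₂ x₃ a' b' c' ∧
        T.Step a x₁ b c ∧ T.Step b x₂ x₁ c ∧ T.Step c x₃ x₁ x₂ := by
  have lab := T.leaf_inj.ne hab
  have lac := T.leaf_inj.ne hac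
  have lbc := T.leaf_inj.ne hbc
  have lab' := T.leaf_inj.ne hab'
  have lac' := T.leaf_inj.ne hac'
  have lbc' := T.leaf_inj.ne hbc'
  constructor
  · intro heq
    set p := T.med (T.leaf a) (T.leaf b) (T.leaf c) with hpdef
    have hp : T.med (T.leaf a) (T.leaf b) (T.leaf c) = p := rfl
    have hp' : T.med (T.leaf a') (T.leaf b') (T.leaf c') = p := heq.symm
    have hdeg : T.G.degree p = 3 := by
      rw [← hp]
      exact T.med_deg3 lab lac lbc (T.leaf_deg a) (T.leaf_deg b) (T.leaf_deg c)
    have hp1 : p ∈ (T.pp (T.leaf a) (T.leaf b)).support := hp ▸ T.med_mem₁ _ _ _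
    have hp2 : p ∈ (T.pp (T.leaf a) (T.leaf c)).support := hp ▸ T.med_mem₂ _ _ _
    have hp3 : p ∈ (T.pp (T.leaf b) (T.leaf c)).support := hp ▸ T.med_mem₃ _ _ _
    have hq1 : p ∈ (T.pp (T.leaf a') (T.leaf b')).support := hp' ▸ T.med_mem₁ _ _ _
    have hq2 : p ∈ (T.pp (T.leaf a') (T.leaf c')).support := hp' ▸ T.med_mem₂ _ _ _
    have hq3 : p ∈ (T.pp (T.leaf b') (T.leaf c')).support := hp' ▸ T.med_mem₃ _ _ _
    have hpl : ∀ y : N, p ≠ T.leaf y := fun y => T.ne_of_deg3 hdeg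
    have nab : T.nxt p (T.leaf a) ≠ T.nxt p (T.leaf b) := T.nxt_ne hp1 (hpl a) (hpl b)
    have nac : T.nxt p (T.leaf a) ≠ T.nxt p (T.leaf c) := T.nxt_ne hp2 (hpl a) (hpl c)
    have nbc : T.nxt p (T.leaf b) ≠ T.nxt p (T.leaf c) := T.nxt_ne hp3 (hpl b) (hpl c)
    have n'ab : T.nxt p (T.leaf a') ≠ T.nxt p (T.leaf b') := T.nxt_ne hq1 (hpl a') (hpl b')
    have n'ac : T.nxt p (T.leaf a') ≠ T.nxt p (T.leaf c') := T.nxt_ne hq2 (hpl a') (hpl c')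
    have n'bc : T.nxt p (T.leaf b') ≠ T.nxt p (T.leaf c') := T.nxt_ne hq3 (hpl b') (hpl c')
    have hcls : ∀ y : N, T.nxt p (T.leaf y) = T.nxt p (T.leaf a) ∨
        T.nxt p (T.leaf y) = T.nxt p (T.leaf b) ∨
        T.nxt p (T.leaf y) = T.nxt p (T.leaf c) :=
      fun y => T.nbr_eq hdeg (T.nxt_adj (hpl a)) (T.nxt_adj (hpl b)) (T.nxt_adj (hpl c))
        nab nac nbc _ (T.nxt_adj (hpl y))
    rcases hcls a' with ha' | ha' | ha'
    · rcases hcls b' with hb' | hb' | hb'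
      · exact absurd (ha'.trans hb'.symm) n'ab
      · rcases hcls c' with hc' | hc' | hc'
        · exact absurd (ha'.trans hc'.symm) n'ac
        · exact absurd (hb'.trans hc'.symm) n'bc
        · exact ⟨a', b', c', Or.inl ⟨rfl, rfl, rfl⟩,
            T.steps_of_aligned hab hac hbc hp ha' hb' hc'⟩
      · rcases hcls c' with hc' | hc' | hc'
        · exact absurd (ha'.trans hc'.symm) n'ac
        · exact ⟨a', c', b', Or.inr (Or.inl ⟨rfl, rfl, rfl⟩),
            T.steps_of_aligned hab hac hbc hp ha' hc' hb'⟩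
        · exact absurd (hb'.trans hc'.symm) n'bc
    · rcases hcls b' with hb' | hb' | hb'
      · rcases hcls c' with hc' | hc' | hc'
        · exact absurd (hb'.trans hc'.symm) n'bc
        · exact absurd (ha'.trans hc'.symm) n'ac
        · exact ⟨b', a', c', Or.inr (Or.inr (Or.inl ⟨rfl, rfl, rfl⟩)),
            T.steps_of_aligned hab hac hbc hp hb' ha' hc'⟩
      · exact absurd (ha'.trans hb'.symm) n'ab
      · rcases hcls c' with hc' | hc' | hc'
        · exact ⟨c', a', b', Or.inr (Or.inr (Or.inr (Or.inr (Or.inl ⟨rfl, rfl, rfl⟩)))),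
            T.steps_of_aligned hab hac hbc hp hc' ha' hb'⟩
        · exact absurd (ha'.trans hc'.symm) n'ac
        · exact absurd (hb'.trans hc'.symm) n'bc
    · rcases hcls b' with hb' | hb' | hb'
      · rcases hcls c' with hc' | hc' | hc'
        · exact absurd (hb'.trans hc'.symm) n'bc
        · exact ⟨b', c', a', Or.inr (Or.inr (Or.inr (Or.inl ⟨rfl, rfl, rfl⟩))),
            T.steps_of_aligned hab hac hbc hp hb' hc' ha'⟩
        · exact absurd (ha'.trans hc'.symm) n'ac
      · rcases hcls c' with hc' | hc' | hc'
        · exact ⟨c', b', a', Or.inr (Or.inr (Or.inr (Or.inr (Or.inr ⟨rfl, rfl, rfl⟩)))),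
            T.steps_of_aligned hab hac hbc hp hc' hb' ha'⟩
        · exact absurd (hb'.trans hc'.symm) n'bc
        · exact absurd (ha'.trans hc'.symm) n'ac
      · exact absurd (ha'.trans hb'.symm) n'ab
  · rintro ⟨x₁, x₂, x₃, hperm, s1, s2, s3⟩
    have hx1b : x₁ ≠ b := by rcases s1 with rfl | ⟨_, h, _, _⟩; exacts [hab, h]
    have hx1c : x₁ ≠ c := by rcases s1 with rfl | ⟨_, _, h, _⟩; exacts [hac, h]
    have hx2x1 : x₂ ≠ x₁ := by
      rcases s2 with rfl | ⟨_, h, _, _⟩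
      · exact Ne.symm hx1b
      · exact h
    have hx2c : x₂ ≠ c := by rcases s2 with rfl | ⟨_, _, h, _⟩; exacts [hbc, h]
    have hx3x1 : x₃ ≠ x₁ := by
      rcases s3 with rfl | ⟨_, h, _, _⟩
      · exact Ne.symm hx1c
      · exact h
    have hx3x2 : x₃ ≠ x₂ := by
      rcases s3 with rfl | ⟨_, _, h, _⟩
      · exact Ne.symm hx2c
      · exact h
    have e1 : T.med (T.leaf x₁) (T.leaf b) (T.leaf c) =
        T.med (T.leaf a) (T.leaf b) (T.leaf c) := (T.step_iff hab hac hbc).mp s1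
    have e2 : T.med (T.leaf x₂) (T.leaf x₁) (T.leaf c) =
        T.med (T.leaf b) (T.leaf x₁) (T.leaf c) :=
      (T.step_iff (Ne.symm hx1b) hbc hx1c).mp s2
    have e3 : T.med (T.leaf x₃) (T.leaf x₁) (T.leaf x₂) =
        T.med (T.leaf c) (T.leaf x₁) (T.leaf x₂) :=
      (T.step_iff (Ne.symm hx1c) (Ne.symm hx2c) (Ne.symm hx2x1)).mp s3
    have lx1b := T.leaf_inj.ne hx1b
    have lx1c := T.leaf_inj.ne hx1c
    have lx21 := T.leaf_inj.ne hx2x1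
    have lx2c := T.leaf_inj.ne hx2c
    have lx31 := T.leaf_inj.ne hx3x1
    have lx32 := T.leaf_inj.ne hx3x2
    -- K : med x₁ x₂ x₃ = med a b c
    have K1 : T.med (T.leaf x₁) (T.leaf b) (T.leaf c) =
        T.med (T.leaf a) (T.leaf b) (T.leaf c) := e1
    have K2 : T.med (T.leaf x₁) (T.leaf x₂) (T.leaf c) =
        T.med (T.leaf x₁) (T.leaf b) (T.leaf c) := by
      have w1 : T.med (T.leaf x₂) (T.leaf x₁) (T.leaf c) =
          T.med (T.leaf x₁) (T.leaf x₂) (T.leaf c) :=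
        T.med_perm_swap12 (Ne.symm lx21) lx1c lx2c
      have w2 : T.med (T.leaf b) (T.leaf x₁) (T.leaf c) =
          T.med (T.leaf x₁) (T.leaf b) (T.leaf c) :=
        T.med_perm_swap12 lx1b lx1c lbc
      rw [← w1, e2, w2]
    have K3 : T.med (T.leaf x₁) (T.leaf x₂) (T.leaf x₃) =
        T.med (T.leaf x₁) (T.leaf x₂) (T.leaf c) := by
      have w1 : T.med (T.leaf x₃) (T.leaf x₁) (T.leaf x₂) =
          T.med (T.leaf x₁) (T.leaf x₂) (T.leaf x₃) :=
        T.med_perm_rot2 (Ne.symm lx21) (Ne.symm lx31) (Ne.symm lx32)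
      have w2 : T.med (T.leaf c) (T.leaf x₁) (T.leaf x₂) =
          T.med (T.leaf x₁) (T.leaf x₂) (T.leaf c) :=
        T.med_perm_rot2 (Ne.symm lx21) lx1c lx2c
      rw [← w1, e3, w2]
    have K : T.med (T.leaf x₁) (T.leaf x₂) (T.leaf x₃) =
        T.med (T.leaf a) (T.leaf b) (T.leaf c) := (K3.trans K2).trans K1
    rcases hperm with ⟨rfl, rfl, rfl⟩ | ⟨rfl, rfl, rfl⟩ | ⟨rfl, rfl, rfl⟩ |
      ⟨rfl, rfl, rfl⟩ | ⟨rfl, rfl, rfl⟩ | ⟨rfl, rfl, rfl⟩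
    · exact K.symm
    · exact K.symm.trans (T.med_perm_swap lab' lac' lbc')
    · exact K.symm.trans (T.med_perm_swap12 lab' lac' lbc')
    · exact K.symm.trans (T.med_perm_rot lab' lac' lbc')
    · exact K.symm.trans (T.med_perm_rot2 lab' lac' lbc')
    · exact K.symm.trans (T.med_perm_swap13 lab' lac' lbc')

lemma step_transfer {T T' : TernaryTree N} (h : T.QT = T'.QT) {s t o₁ o₂ : N}
    (h1 : o₁ ≠ o₂) (h2 : o₁ ≠ s) (h3 : o₂ ≠ s) :
    T.Step s t o₁ o₂ → T'.Step s t o₁ o₂ := by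
  rintro (rfl | ⟨hts, hto1, hto2, hc⟩)
  · exact Or.inl rfl
  · refine Or.inr ⟨hts, hto1, hto2, ?_⟩
    have hm := (T.mem_QT_iff h1 h2 (Ne.symm hto1) h3 (Ne.symm hto2) (Ne.symm hts)).mpr hc
    rw [h] at hm
    exact (T'.mem_QT_iff h1 h2 (Ne.symm hto1) h3 (Ne.symm hto2) (Ne.symm hts)).mp hm

lemma steps_transfer {T T' : TernaryTree N} (h : T.QT = T'.QT) {a b c x₁ x₂ x₃ : N}
    (hab : a ≠ b) (hac : a ≠ c) (hbc : b ≠ c)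
    (hs : T.Step a x₁ b c ∧ T.Step b x₂ x₁ c ∧ T.Step c x₃ x₁ x₂) :
    T'.Step a x₁ b c ∧ T'.Step b x₂ x₁ c ∧ T'.Step c x₃ x₁ x₂ := by
  obtain ⟨s1, s2, s3⟩ := hs
  have hx1b : x₁ ≠ b := by rcases s1 with rfl | ⟨_, h', _, _⟩; exacts [hab, h']
  have hx1c : x₁ ≠ c := by rcases s1 with rfl | ⟨_, _, h', _⟩; exacts [hac, h']
  have hx2c : x₂ ≠ c := by rcases s2 with rfl | ⟨_, _, h', _⟩; exacts [hbc, h']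
  have hx2x1 : x₂ ≠ x₁ := by
    rcases s2 with rfl | ⟨_, h', _, _⟩
    · exact Ne.symm hx1b
    · exact h'
  exact ⟨step_transfer h hbc (Ne.symm hab) (Ne.symm hac) s1,
    step_transfer h hx1c hx1b (Ne.symm hbc) s2,
    step_transfer h (Ne.symm hx2x1) hx1c hx2c s3⟩

lemma med_transfer {T T' : TernaryTree N} (h : T.QT = T'.QT) {a b c a' b' c' : N}
    (hab : a ≠ b) (hac : a ≠ c) (hbc : b ≠ c)
    (hab' : a' ≠ b') (hac' : a' ≠ c') (hbc' : b' ≠ c') :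
    T.med (T.leaf a) (T.leaf b) (T.leaf c) = T.med (T.leaf a') (T.leaf b') (T.leaf c') ↔
    T'.med (T'.leaf a) (T'.leaf b) (T'.leaf c) =
      T'.med (T'.leaf a') (T'.leaf b') (T'.leaf c') := by
  rw [T.med_eq_iff_steps hab hac hbc hab' hac' hbc',
    T'.med_eq_iff_steps hab hac hbc hab' hac' hbc']
  constructor
  · rintro ⟨x₁, x₂, x₃, hperm, s1, s2, s3⟩
    obtain ⟨t1, t2, t3⟩ := steps_transfer h hab hac hbc ⟨s1, s2, s3⟩
    exact ⟨x₁, x₂, x₃, hperm, t1, t2, t3⟩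
  · rintro ⟨x₁, x₂, x₃, hperm, s1, s2, s3⟩
    obtain ⟨t1, t2, t3⟩ := steps_transfer h.symm hab hac hbc ⟨s1, s2, s3⟩
    exact ⟨x₁, x₂, x₃, hperm, t1, t2, t3⟩
lemma leaf_ne {y z : N} (h : T.leaf y ≠ T.leaf z) : y ≠ z :=
  fun he => h (congrArg _ he)

lemma adj_leaf_aux {a b c x : N} {p : T.V} (hab : a ≠ b) (hac : a ≠ c) (hbc : b ≠ c)
    (hmed : T.med (T.leaf a) (T.leaf b) (T.leaf c) = p)
    (hx : T.nxt p (T.leaf x) = T.nxt p (T.leaf a)) (hadj : T.G.Adj (T.leaf x) p) :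
    ∃ s t : N, s ≠ t ∧ x ≠ s ∧ x ≠ t ∧
      T.med (T.leaf x) (T.leaf s) (T.leaf t) = p ∧
      ∀ y : N, y ≠ x → y ≠ s → y ≠ t →
        T.med (T.leaf s) (T.leaf t) (T.leaf y) ≠ p := by
  have lab := T.leaf_inj.ne hab
  have lac := T.leaf_inj.ne hac
  have lbc := T.leaf_inj.ne hbc
  have hdeg : T.G.degree p = 3 := by
    rw [← hmed]
    exact T.med_deg3 lab lac lbc (T.leaf_deg a) (T.leaf_deg b) (T.leaf_deg c)
  have hpl : ∀ y : N, p ≠ T.leaf y := fun y => T.ne_of_deg3 hdeg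
  have hp1 : p ∈ (T.pp (T.leaf a) (T.leaf b)).support := hmed ▸ T.med_mem₁ _ _ _
  have hp2 : p ∈ (T.pp (T.leaf a) (T.leaf c)).support := hmed ▸ T.med_mem₂ _ _ _
  have hp3 : p ∈ (T.pp (T.leaf b) (T.leaf c)).support := hmed ▸ T.med_mem₃ _ _ _
  have nab : T.nxt p (T.leaf a) ≠ T.nxt p (T.leaf b) := T.nxt_ne hp1 (hpl a) (hpl b)
  have nac : T.nxt p (T.leaf a) ≠ T.nxt p (T.leaf c) := T.nxt_ne hp2 (hpl a) (hpl c)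
  have nbc : T.nxt p (T.leaf b) ≠ T.nxt p (T.leaf c) := T.nxt_ne hp3 (hpl b) (hpl c)
  have hxb : x ≠ b := T.leaf_ne (fun he => nab (by rw [← hx, he]))
  have hxc : x ≠ c := T.leaf_ne (fun he => nac (by rw [← hx, he]))
  have nxL : T.nxt p (T.leaf x) = T.leaf x := T.adj_nxt_eq hadj.symm
  refine ⟨b, c, hbc, hxb, hxc, ?_, ?_⟩
  · exact T.med_eq (T.leaf_inj.ne hxb) (T.leaf_inj.ne hxc) lbc
      (T.mem_pp_of_nxt_ne (by rw [hx]; exact nab))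
      (T.mem_pp_of_nxt_ne (by rw [hx]; exact nac)) hp3
  · intro y hyx hys hyt hmy
    have hq2 : p ∈ (T.pp (T.leaf b) (T.leaf y)).support := hmy ▸ T.med_mem₂ _ _ _
    have hq3 : p ∈ (T.pp (T.leaf c) (T.leaf y)).support := hmy ▸ T.med_mem₃ _ _ _
    have nyb : T.nxt p (T.leaf y) ≠ T.nxt p (T.leaf b) :=
      Ne.symm (T.nxt_ne hq2 (hpl b) (hpl y))
    have nyc : T.nxt p (T.leaf y) ≠ T.nxt p (T.leaf c) :=
      Ne.symm (T.nxt_ne hq3 (hpl c) (hpl y))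
    have hcls := T.nbr_eq hdeg (T.nxt_adj (hpl a)) (T.nxt_adj (hpl b)) (T.nxt_adj (hpl c))
      nab nac nbc _ (T.nxt_adj (hpl y))
    have hya : T.nxt p (T.leaf y) = T.nxt p (T.leaf a) := by
      rcases hcls with h' | h' | h'
      · exact h'
      · exact absurd h' nyb
      · exact absurd h' nyc
    have hylx : T.nxt p (T.leaf y) = T.leaf x := by rw [hya, ← hx, nxL]
    have hmemx : T.leaf x ∈ (T.pp p (T.leaf y)).support := hylx ▸ T.nxt_mem
    have hlylx : T.leaf x ≠ T.leaf y := T.leaf_inj.ne (Ne.symm hyx)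
    have := T.interior_deg3 hmemx (Ne.symm (hpl x)) hlylx
    rw [T.leaf_deg x] at this
    omega

lemma adj_leaf_iff {p : T.V} (hp3 : T.G.degree p = 3) (x : N) :
    T.G.Adj (T.leaf x) p ↔
      ∃ s t : N, s ≠ t ∧ x ≠ s ∧ x ≠ t ∧
        T.med (T.leaf x) (T.leaf s) (T.leaf t) = p ∧
        ∀ y : N, y ≠ x → y ≠ s → y ≠ t →
          T.med (T.leaf s) (T.leaf t) (T.leaf y) ≠ p := by
  have hpl : ∀ y : N, p ≠ T.leaf y := fun y => T.ne_of_deg3 hp3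
  constructor
  · intro hadj
    obtain ⟨⟨a, b, c⟩, hab, hac, hbc, hmed⟩ := T.exists_rep hp3
    simp only at hab hac hbc hmed
    have lab := T.leaf_inj.ne hab
    have lac := T.leaf_inj.ne hac
    have lbc := T.leaf_inj.ne hbc
    have hp1 : p ∈ (T.pp (T.leaf a) (T.leaf b)).support := hmed ▸ T.med_mem₁ _ _ _
    have hp2 : p ∈ (T.pp (T.leaf a) (T.leaf c)).support := hmed ▸ T.med_mem₂ _ _ _
    have hp3m : p ∈ (T.pp (T.leaf b) (T.leaf c)).support := hmed ▸ T.med_mem₃ _ _ _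
    have nab : T.nxt p (T.leaf a) ≠ T.nxt p (T.leaf b) := T.nxt_ne hp1 (hpl a) (hpl b)
    have nac : T.nxt p (T.leaf a) ≠ T.nxt p (T.leaf c) := T.nxt_ne hp2 (hpl a) (hpl c)
    have nbc : T.nxt p (T.leaf b) ≠ T.nxt p (T.leaf c) := T.nxt_ne hp3m (hpl b) (hpl c)
    have hcls := T.nbr_eq hp3 (T.nxt_adj (hpl a)) (T.nxt_adj (hpl b)) (T.nxt_adj (hpl c))
      nab nac nbc _ (T.nxt_adj (hpl x))
    rcases hcls with hx | hx | hx
    · exact T.adj_leaf_aux hab hac hbc hmed hx hadj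
    · have hmed' : T.med (T.leaf b) (T.leaf a) (T.leaf c) = p :=
        (T.med_perm_swap12 lab lac lbc).trans hmed
      exact T.adj_leaf_aux (Ne.symm hab) hbc hac hmed' hx hadj
    · have hmed' : T.med (T.leaf c) (T.leaf a) (T.leaf b) = p :=
        (T.med_perm_rot2 lab lac lbc).trans hmed
      exact T.adj_leaf_aux (Ne.symm hac) (Ne.symm hbc) hab hmed' hx hadj
  · rintro ⟨s, t, hst, hxs, hxt, hmed, hsep⟩
    by_contra hnadj
    set r := T.nxt p (T.leaf x) with hrdef
    have hrp : r ≠ p := T.nxt_ne_self (hpl x)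
    have hadjpr : T.G.Adj p r := T.nxt_adj (hpl x)
    have hrlx : r ≠ T.leaf x := by
      intro he
      rw [he] at hadjpr
      exact hnadj hadjpr.symm
    have hrmem : r ∈ (T.pp p (T.leaf x)).support := T.nxt_mem
    have hdegr : T.G.degree r = 3 := T.interior_deg3 hrmem hrp hrlx
    have he12 : T.nxt r p ≠ T.nxt r (T.leaf x) := T.nxt_ne hrmem hrp hrlx
    obtain ⟨e₃, hadje₃, he₃1, he₃2⟩ := T.exists_third_nbr hdegr
      (T.nxt_adj hrp) (T.nxt_adj hrlx) he12
    obtain ⟨z, hdz, hzr, hnz⟩ := T.exists_leaf_dir hadje₃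
    obtain ⟨y, hy⟩ := T.leaf_surj z hdz
    have hnly : T.nxt r (T.leaf y) = e₃ := by rw [hy]; exact hnz
    have hr_ply : r ∈ (T.pp p (T.leaf y)).support := by
      apply T.mem_pp_glue
      intro w hw1 hw2
      by_contra hwr
      have q1 : T.nxt r w = T.nxt r p := T.nxt_eq (T.mem_pp_symm hw1) hwr
      have q2 : T.nxt r w = T.nxt r (T.leaf y) := T.nxt_eq hw2 hwr
      rw [hnly] at q2
      exact he₃1 (by rw [← q2, q1])
    have n_y : T.nxt p (T.leaf y) = T.nxt p (T.leaf x) := by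
      have e1 : T.nxt p r = T.nxt p (T.leaf y) := T.nxt_eq hr_ply hrp
      have e2 : T.nxt p r = T.nxt p (T.leaf x) := T.nxt_eq hrmem hrp
      rw [← e1, e2]
    have hyx : y ≠ x := by
      apply T.leaf_ne
      intro he
      apply he₃2
      rw [← hnly, he]
    have hq1 : p ∈ (T.pp (T.leaf x) (T.leaf s)).support := hmed ▸ T.med_mem₁ _ _ _
    have hq2 : p ∈ (T.pp (T.leaf x) (T.leaf t)).support := hmed ▸ T.med_mem₂ _ _ _
    have hq3 : p ∈ (T.pp (T.leaf s) (T.leaf t)).support := hmed ▸ T.med_mem₃ _ _ _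
    have nxs : T.nxt p (T.leaf x) ≠ T.nxt p (T.leaf s) := T.nxt_ne hq1 (hpl x) (hpl s)
    have nxt' : T.nxt p (T.leaf x) ≠ T.nxt p (T.leaf t) := T.nxt_ne hq2 (hpl x) (hpl t)
    have hys : y ≠ s := T.leaf_ne (fun he => nxs (by rw [← n_y, he]))
    have hyt : y ≠ t := T.leaf_ne (fun he => nxt' (by rw [← n_y, he]))
    apply hsep y hyx hys hyt
    exact T.med_eq (T.leaf_inj.ne hst) (T.leaf_inj.ne (Ne.symm hys))
      (T.leaf_inj.ne (Ne.symm hyt)) hq3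
      (T.mem_pp_of_nxt_ne (by rw [n_y]; exact Ne.symm nxs))
      (T.mem_pp_of_nxt_ne (by rw [n_y]; exact Ne.symm nxt'))

lemma two_dirs {p q : T.V} (hp3 : T.G.degree p = 3) (hadj : T.G.Adj p q) :
    ∃ s t : N, s ≠ t ∧
      T.nxt p (T.leaf s) ≠ T.nxt p (T.leaf t) ∧
      T.nxt p (T.leaf s) ≠ q ∧ T.nxt p (T.leaf t) ≠ q ∧
      (∀ z, T.G.Adj p z → z = T.nxt p (T.leaf s) ∨ z = T.nxt p (T.leaf t) ∨ z = q) := by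
  have hpl : ∀ y : N, p ≠ T.leaf y := fun y => T.ne_of_deg3 hp3
  obtain ⟨⟨a, b, c⟩, hab, hac, hbc, hmed⟩ := T.exists_rep hp3
  simp only at hab hac hbc hmed
  have hp1 : p ∈ (T.pp (T.leaf a) (T.leaf b)).support := hmed ▸ T.med_mem₁ _ _ _
  have hp2 : p ∈ (T.pp (T.leaf a) (T.leaf c)).support := hmed ▸ T.med_mem₂ _ _ _
  have hp3m : p ∈ (T.pp (T.leaf b) (T.leaf c)).support := hmed ▸ T.med_mem₃ _ _ _
  have nab : T.nxt p (T.leaf a) ≠ T.nxt p (T.leaf b) := T.nxt_ne hp1 (hpl a) (hpl b)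
  have nac : T.nxt p (T.leaf a) ≠ T.nxt p (T.leaf c) := T.nxt_ne hp2 (hpl a) (hpl c)
  have nbc : T.nxt p (T.leaf b) ≠ T.nxt p (T.leaf c) := T.nxt_ne hp3m (hpl b) (hpl c)
  have hcls := T.nbr_eq hp3 (T.nxt_adj (hpl a)) (T.nxt_adj (hpl b)) (T.nxt_adj (hpl c))
    nab nac nbc
  rcases hcls q hadj with hq | hq | hq
  · refine ⟨b, c, hbc, nbc, ?_, ?_, ?_⟩
    · rw [hq]; exact Ne.symm nab
    · rw [hq]; exact Ne.symm nac
    · intro z hz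
      rcases hcls z hz with h' | h' | h'
      · exact Or.inr (Or.inr (h'.trans hq.symm))
      · exact Or.inl h'
      · exact Or.inr (Or.inl h')
  · refine ⟨a, c, hac, nac, ?_, ?_, ?_⟩
    · rw [hq]; exact nab
    · rw [hq]; exact Ne.symm nbc
    · intro z hz
      rcases hcls z hz with h' | h' | h'
      · exact Or.inl h'
      · exact Or.inr (Or.inr (h'.trans hq.symm))
      · exact Or.inr (Or.inl h')
  · refine ⟨a, b, hab, nab, ?_, ?_, ?_⟩
    · rw [hq]; exact nac
    · rw [hq]; exact nbc
    · intro z hz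
      rcases hcls z hz with h' | h' | h'
      · exact Or.inl h'
      · exact Or.inr (Or.inl h')
      · exact Or.inr (Or.inr (h'.trans hq.symm))

lemma adj_int_iff {p q : T.V} (hp3 : T.G.degree p = 3) (hq3 : T.G.degree q = 3) :
    T.G.Adj p q ↔
      p ≠ q ∧ ∃ s t u w : N, s ≠ t ∧ s ≠ u ∧ s ≠ w ∧ t ≠ u ∧ t ≠ w ∧ u ≠ w ∧
        T.med (T.leaf s) (T.leaf t) (T.leaf u) = p ∧
        T.med (T.leaf s) (T.leaf t) (T.leaf w) = p ∧
        T.med (T.leaf u) (T.leaf w) (T.leaf s) = q ∧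
        T.med (T.leaf u) (T.leaf w) (T.leaf t) = q ∧
        ∀ y : N, y ≠ s → y ≠ t → y ≠ u → y ≠ w →
          ¬(T.med (T.leaf s) (T.leaf t) (T.leaf y) = p ∧
            T.med (T.leaf u) (T.leaf w) (T.leaf y) = q) := by
  have hpl : ∀ y : N, p ≠ T.leaf y := fun y => T.ne_of_deg3 hp3
  have hql : ∀ y : N, q ≠ T.leaf y := fun y => T.ne_of_deg3 hq3
  constructor
  · intro hadj
    have hpq : p ≠ q := T.G.ne_of_adj hadj
    obtain ⟨s, t, hst, nst, nsq, ntq, hclsP⟩ := T.two_dirs hp3 hadj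
    obtain ⟨u, w, huw, nuw, nup, nwp, hclsQ⟩ := T.two_dirs hq3 hadj.symm
    have nxtpq : T.nxt p q = q := T.adj_nxt_eq hadj
    have nxtqp : T.nxt q p = p := T.adj_nxt_eq hadj.symm
    -- paths from p to u,w pass through q
    have hqu : q ∈ (T.pp p (T.leaf u)).support := by
      apply T.mem_pp_glue
      intro z hz1 hz2
      by_contra hzq
      have q1 : T.nxt q z = T.nxt q p := T.nxt_eq (T.mem_pp_symm hz1) hzq
      have q2 : T.nxt q z = T.nxt q (T.leaf u) := T.nxt_eq hz2 hzq
      rw [nxtqp] at q1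
      exact nup (by rw [← q2, q1])
    have hqw : q ∈ (T.pp p (T.leaf w)).support := by
      apply T.mem_pp_glue
      intro z hz1 hz2
      by_contra hzq
      have q1 : T.nxt q z = T.nxt q p := T.nxt_eq (T.mem_pp_symm hz1) hzq
      have q2 : T.nxt q z = T.nxt q (T.leaf w) := T.nxt_eq hz2 hzq
      rw [nxtqp] at q1
      exact nwp (by rw [← q2, q1])
    have hps : p ∈ (T.pp q (T.leaf s)).support := by
      apply T.mem_pp_glue
      intro z hz1 hz2
      by_contra hzp
      have q1 : T.nxt p z = T.nxt p q := T.nxt_eq (T.mem_pp_symm hz1) hzp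
      have q2 : T.nxt p z = T.nxt p (T.leaf s) := T.nxt_eq hz2 hzp
      rw [nxtpq] at q1
      exact nsq (by rw [← q2, q1])
    have hpt : p ∈ (T.pp q (T.leaf t)).support := by
      apply T.mem_pp_glue
      intro z hz1 hz2
      by_contra hzp
      have q1 : T.nxt p z = T.nxt p q := T.nxt_eq (T.mem_pp_symm hz1) hzp
      have q2 : T.nxt p z = T.nxt p (T.leaf t) := T.nxt_eq hz2 hzp
      rw [nxtpq] at q1
      exact ntq (by rw [← q2, q1])
    have npu : T.nxt p (T.leaf u) = q :=
      (T.nxt_eq hqu (Ne.symm hpq)).symm.trans nxtpq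
    have npw : T.nxt p (T.leaf w) = q :=
      (T.nxt_eq hqw (Ne.symm hpq)).symm.trans nxtpq
    have nqs : T.nxt q (T.leaf s) = p :=
      (T.nxt_eq hps hpq).symm.trans nxtqp
    have nqt : T.nxt q (T.leaf t) = p :=
      (T.nxt_eq hpt hpq).symm.trans nxtqp
    have lsu : s ≠ u := T.leaf_ne (fun he => nsq (by rw [he, npu]))
    have lsw : s ≠ w := T.leaf_ne (fun he => nsq (by rw [he, npw]))
    have ltu : t ≠ u := T.leaf_ne (fun he => ntq (by rw [he, npu]))
    have ltw : t ≠ w := T.leaf_ne (fun he => ntq (by rw [he, npw]))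
    refine ⟨hpq, s, t, u, w, hst, lsu, lsw, ltu, ltw, huw, ?_, ?_, ?_, ?_, ?_⟩
    · exact T.med_eq (T.leaf_inj.ne hst) (T.leaf_inj.ne lsu) (T.leaf_inj.ne ltu)
        (T.mem_pp_of_nxt_ne nst) (T.mem_pp_of_nxt_ne (by rw [npu]; exact nsq))
        (T.mem_pp_of_nxt_ne (by rw [npu]; exact ntq))
    · exact T.med_eq (T.leaf_inj.ne hst) (T.leaf_inj.ne lsw) (T.leaf_inj.ne ltw)
        (T.mem_pp_of_nxt_ne nst) (T.mem_pp_of_nxt_ne (by rw [npw]; exact nsq))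
        (T.mem_pp_of_nxt_ne (by rw [npw]; exact ntq))
    · exact T.med_eq (T.leaf_inj.ne huw) (T.leaf_inj.ne (Ne.symm lsu))
        (T.leaf_inj.ne (Ne.symm lsw))
        (T.mem_pp_of_nxt_ne nuw) (T.mem_pp_of_nxt_ne (by rw [nqs]; exact nup))
        (T.mem_pp_of_nxt_ne (by rw [nqs]; exact nwp))
    · exact T.med_eq (T.leaf_inj.ne huw) (T.leaf_inj.ne (Ne.symm ltu))
        (T.leaf_inj.ne (Ne.symm ltw))
        (T.mem_pp_of_nxt_ne nuw) (T.mem_pp_of_nxt_ne (by rw [nqt]; exact nup))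
        (T.mem_pp_of_nxt_ne (by rw [nqt]; exact nwp))
    · rintro y hys hyt hyu hyw ⟨hmy1, hmy2⟩
      have hy1 : p ∈ (T.pp (T.leaf s) (T.leaf y)).support := hmy1 ▸ T.med_mem₂ _ _ _
      have hy2 : p ∈ (T.pp (T.leaf t) (T.leaf y)).support := hmy1 ▸ T.med_mem₃ _ _ _
      have hy3 : q ∈ (T.pp (T.leaf u) (T.leaf y)).support := hmy2 ▸ T.med_mem₂ _ _ _
      have hy4 : q ∈ (T.pp (T.leaf w) (T.leaf y)).support := hmy2 ▸ T.med_mem₃ _ _ _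
      have nys : T.nxt p (T.leaf y) ≠ T.nxt p (T.leaf s) :=
        Ne.symm (T.nxt_ne hy1 (hpl s) (hpl y))
      have nyt : T.nxt p (T.leaf y) ≠ T.nxt p (T.leaf t) :=
        Ne.symm (T.nxt_ne hy2 (hpl t) (hpl y))
      have hnyq : T.nxt p (T.leaf y) = q := by
        rcases hclsP _ (T.nxt_adj (hpl y)) with h' | h' | h'
        · exact absurd h' nys
        · exact absurd h' nyt
        · exact h'
      have nyu : T.nxt q (T.leaf y) ≠ T.nxt q (T.leaf u) :=
        Ne.symm (T.nxt_ne hy3 (hql u) (hql y))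
      have nyw : T.nxt q (T.leaf y) ≠ T.nxt q (T.leaf w) :=
        Ne.symm (T.nxt_ne hy4 (hql w) (hql y))
      have hnyp : T.nxt q (T.leaf y) = p := by
        rcases hclsQ _ (T.nxt_adj (hql y)) with h' | h' | h'
        · exact absurd h' nyu
        · exact absurd h' nyw
        · exact h'
      exact T.not_mem_both hpq (hnyq ▸ T.nxt_mem) (hnyp ▸ T.nxt_mem)
  · rintro ⟨hpq, s, t, u, w, hst, hsu, hsw, htu, htw, huw,
      m1, m2, m3, m4, hsep⟩
    by_contra hnadj
    have hp_st : p ∈ (T.pp (T.leaf s) (T.leaf t)).support := m1 ▸ T.med_mem₁ _ _ _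
    have hp_su : p ∈ (T.pp (T.leaf s) (T.leaf u)).support := m1 ▸ T.med_mem₂ _ _ _
    have hp_tu : p ∈ (T.pp (T.leaf t) (T.leaf u)).support := m1 ▸ T.med_mem₃ _ _ _
    have hp_sw : p ∈ (T.pp (T.leaf s) (T.leaf w)).support := m2 ▸ T.med_mem₂ _ _ _
    have hp_tw : p ∈ (T.pp (T.leaf t) (T.leaf w)).support := m2 ▸ T.med_mem₃ _ _ _
    have hq_uw : q ∈ (T.pp (T.leaf u) (T.leaf w)).support := m3 ▸ T.med_mem₁ _ _ _
    have hq_us : q ∈ (T.pp (T.leaf u) (T.leaf s)).support := m3 ▸ T.med_mem₂ _ _ _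
    have hq_ws : q ∈ (T.pp (T.leaf w) (T.leaf s)).support := m3 ▸ T.med_mem₃ _ _ _
    have hq_ut : q ∈ (T.pp (T.leaf u) (T.leaf t)).support := m4 ▸ T.med_mem₂ _ _ _
    have hq_wt : q ∈ (T.pp (T.leaf w) (T.leaf t)).support := m4 ▸ T.med_mem₃ _ _ _
    have nAB : T.nxt p (T.leaf s) ≠ T.nxt p (T.leaf t) := T.nxt_ne hp_st (hpl s) (hpl t)
    have nAu : T.nxt p (T.leaf s) ≠ T.nxt p (T.leaf u) := T.nxt_ne hp_su (hpl s) (hpl u)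
    have nBu : T.nxt p (T.leaf t) ≠ T.nxt p (T.leaf u) := T.nxt_ne hp_tu (hpl t) (hpl u)
    have nAw : T.nxt p (T.leaf s) ≠ T.nxt p (T.leaf w) := T.nxt_ne hp_sw (hpl s) (hpl w)
    have nBw : T.nxt p (T.leaf t) ≠ T.nxt p (T.leaf w) := T.nxt_ne hp_tw (hpl t) (hpl w)
    have hCuw : T.nxt p (T.leaf u) = T.nxt p (T.leaf w) :=
      T.nbrs_classify hp3 (T.nxt_adj (hpl s)) (T.nxt_adj (hpl t)) nAB
        (T.nxt_adj (hpl u)) (Ne.symm nAu) (Ne.symm nBu)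
        (T.nxt_adj (hpl w)) (Ne.symm nAw) (Ne.symm nBw)
    have nDE : T.nxt q (T.leaf u) ≠ T.nxt q (T.leaf w) := T.nxt_ne hq_uw (hql u) (hql w)
    have nDs : T.nxt q (T.leaf u) ≠ T.nxt q (T.leaf s) := T.nxt_ne hq_us (hql u) (hql s)
    have nEs : T.nxt q (T.leaf w) ≠ T.nxt q (T.leaf s) := T.nxt_ne hq_ws (hql w) (hql s)
    have nDt : T.nxt q (T.leaf u) ≠ T.nxt q (T.leaf t) := T.nxt_ne hq_ut (hql u) (hql t)
    have nEt : T.nxt q (T.leaf w) ≠ T.nxt q (T.leaf t) := T.nxt_ne hq_wt (hql w) (hql t)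
    have hFst : T.nxt q (T.leaf s) = T.nxt q (T.leaf t) :=
      T.nbrs_classify hq3 (T.nxt_adj (hql u)) (T.nxt_adj (hql w)) nDE
        (T.nxt_adj (hql s)) (Ne.symm nDs) (Ne.symm nEs)
        (T.nxt_adj (hql t)) (Ne.symm nDt) (Ne.symm nEt)
    -- locate q on the path from p to u
    have hqmem : q ∈ (T.pp p (T.leaf u)).support := by
      rcases T.mem_pp_decomp hp_su (T.mem_pp_symm hq_us) with h' | h'
      · exfalso
        have e1 : T.nxt p q = T.nxt p (T.leaf s) := T.nxt_eq (T.mem_pp_symm h') (Ne.symm hpq)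
        rcases T.mem_pp_decomp hp_tu (T.mem_pp_symm hq_ut) with h'' | h''
        · have e2 : T.nxt p q = T.nxt p (T.leaf t) :=
            T.nxt_eq (T.mem_pp_symm h'') (Ne.symm hpq)
          exact nAB (e1.symm.trans e2)
        · have e2 : T.nxt p q = T.nxt p (T.leaf u) := T.nxt_eq h'' (Ne.symm hpq)
          exact nAu (e1.symm.trans e2)
      · exact h'
    have nxtpq : T.nxt p q = T.nxt p (T.leaf u) := T.nxt_eq hqmem (Ne.symm hpq)
    -- locate p on the path from q to s
    have hpmem : p ∈ (T.pp q (T.leaf s)).support := by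
      rcases T.mem_pp_decomp hq_us (T.mem_pp_symm hp_su) with h' | h'
      · exact absurd (T.pp_antisymm h' (T.mem_pp_symm hqmem)) hpq
      · exact h'
    have nxtqp : T.nxt q p = T.nxt q (T.leaf s) := T.nxt_eq hpmem hpq
    -- the vertex after p towards q
    obtain ⟨r, hrdef⟩ : ∃ r, r = T.nxt p q := ⟨_, rfl⟩
    have hrp : r ≠ p := by rw [hrdef]; exact T.nxt_ne_self hpq
    have hrq : r ≠ q := by
      intro he
      apply hnadj
      have hA := T.nxt_adj hpq
      rw [← hrdef, he] at hA
      exact hA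
    have hrmem : r ∈ (T.pp p q).support := by rw [hrdef]; exact T.nxt_mem
    have hdegr : T.G.degree r = 3 := T.interior_deg3 hrmem hrp hrq
    have he12 : T.nxt r p ≠ T.nxt r q := T.nxt_ne hrmem hrp hrq
    obtain ⟨e₃, hadje₃, he₃1, he₃2⟩ := T.exists_third_nbr hdegr
      (T.nxt_adj hrp) (T.nxt_adj hrq) he12
    obtain ⟨z, hdz, hzr, hnz⟩ := T.exists_leaf_dir hadje₃
    obtain ⟨y, hy⟩ := T.leaf_surj z hdz
    have hnly : T.nxt r (T.leaf y) = e₃ := by rw [hy]; exact hnz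
    have hr_ply : r ∈ (T.pp p (T.leaf y)).support := by
      apply T.mem_pp_glue
      intro v hv1 hv2
      by_contra hvr
      have q1 : T.nxt r v = T.nxt r p := T.nxt_eq (T.mem_pp_symm hv1) hvr
      have q2 : T.nxt r v = T.nxt r (T.leaf y) := T.nxt_eq hv2 hvr
      rw [hnly] at q2
      exact he₃1 (by rw [← q2, q1])
    have hr_qly : r ∈ (T.pp q (T.leaf y)).support := by
      apply T.mem_pp_glue
      intro v hv1 hv2
      by_contra hvr
      have q1 : T.nxt r v = T.nxt r q := T.nxt_eq (T.mem_pp_symm hv1) hvr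
      have q2 : T.nxt r v = T.nxt r (T.leaf y) := T.nxt_eq hv2 hvr
      rw [hnly] at q2
      exact he₃2 (by rw [← q2, q1])
    have ny_p : T.nxt p (T.leaf y) = T.nxt p (T.leaf u) := by
      have e1 : T.nxt p r = T.nxt p (T.leaf y) := T.nxt_eq hr_ply hrp
      have e2 : T.nxt p r = T.nxt p q := T.nxt_eq hrmem hrp
      rw [← e1, e2, nxtpq]
    have ny_q : T.nxt q (T.leaf y) = T.nxt q (T.leaf s) := by
      have e1 : T.nxt q r = T.nxt q (T.leaf y) := T.nxt_eq hr_qly hrq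
      have e2 : T.nxt q r = T.nxt q p := T.nxt_eq (T.mem_pp_symm hrmem) hrq
      rw [← e1, e2, nxtqp]
    have hys : y ≠ s := T.leaf_ne (fun he => nAu (by rw [← he, ny_p]))
    have hyt : y ≠ t := T.leaf_ne (fun he => nBu (by rw [← he, ny_p]))
    have hyu : y ≠ u := T.leaf_ne (fun he => nDs (by rw [← he, ny_q]))
    have hyw : y ≠ w := T.leaf_ne (fun he => nEs (by rw [← he, ny_q]))
    apply hsep y hys hyt hyu hyw
    constructor
    · exact T.med_eq (T.leaf_inj.ne hst) (T.leaf_inj.ne (Ne.symm hys))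
        (T.leaf_inj.ne (Ne.symm hyt)) hp_st
        (T.mem_pp_of_nxt_ne (by rw [ny_p]; exact nAu))
        (T.mem_pp_of_nxt_ne (by rw [ny_p]; exact nBu))
    · exact T.med_eq (T.leaf_inj.ne huw) (T.leaf_inj.ne (Ne.symm hyu))
        (T.leaf_inj.ne (Ne.symm hyw)) hq_uw
        (T.mem_pp_of_nxt_ne (by rw [ny_q]; exact nDs))
        (T.mem_pp_of_nxt_ne (by rw [ny_q]; exact nEs))

noncomputable def lbl {v : T.V} (hv : T.G.degree v = 1) : N := (T.leaf_surj v hv).choose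

lemma lbl_spec {v : T.V} (hv : T.G.degree v = 1) : T.leaf (T.lbl hv) = v :=
  (T.leaf_surj v hv).choose_spec

noncomputable def rep {v : T.V} (h3 : T.G.degree v = 3) : N × N × N :=
  (T.exists_rep h3).choose

lemma rep_spec {v : T.V} (h3 : T.G.degree v = 3) :
    (T.rep h3).1 ≠ (T.rep h3).2.1 ∧ (T.rep h3).1 ≠ (T.rep h3).2.2 ∧
    (T.rep h3).2.1 ≠ (T.rep h3).2.2 ∧
    T.med (T.leaf (T.rep h3).1) (T.leaf (T.rep h3).2.1) (T.leaf (T.rep h3).2.2) = v :=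
  (T.exists_rep h3).choose_spec

end TernaryTree

namespace TernaryTree

open SimpleGraph Walk

variable {N : Type} (T T' : TernaryTree N)

/-- The canonical vertex map between two ternary trees. -/
noncomputable def mapV (v : T.V) : T'.V :=
  if hv : T.G.degree v = 1 then T'.leaf (T.lbl hv)
  else
    T'.med (T'.leaf (T.rep ((T.deg13 v).resolve_left hv)).1)
      (T'.leaf (T.rep ((T.deg13 v).resolve_left hv)).2.1)
      (T'.leaf (T.rep ((T.deg13 v).resolve_left hv)).2.2)

lemma mapV_deg1 {v : T.V} (hv : T.G.degree v = 1) :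
    mapV T T' v = T'.leaf (T.lbl hv) := dif_pos hv

lemma mapV_leaf (x : N) : mapV T T' (T.leaf x) = T'.leaf x := by
  rw [mapV_deg1 T T' (T.leaf_deg x)]
  exact congrArg T'.leaf (T.leaf_inj (T.lbl_spec (T.leaf_deg x)))

lemma mapV_deg3 {v : T.V} (hv : ¬ T.G.degree v = 1) :
    mapV T T' v = T'.med (T'.leaf (T.rep ((T.deg13 v).resolve_left hv)).1)
      (T'.leaf (T.rep ((T.deg13 v).resolve_left hv)).2.1)
      (T'.leaf (T.rep ((T.deg13 v).resolve_left hv)).2.2) := dif_neg hv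

lemma mapV_deg3' {v : T.V} (hv : ¬ T.G.degree v = 1) :
    T'.G.degree (mapV T T' v) = 3 := by
  rw [mapV_deg3 T T' hv]
  obtain ⟨d1, d2, d3, _⟩ := T.rep_spec ((T.deg13 v).resolve_left hv)
  exact T'.med_deg3 (T'.leaf_inj.ne d1) (T'.leaf_inj.ne d2) (T'.leaf_inj.ne d3)
    (T'.leaf_deg _) (T'.leaf_deg _) (T'.leaf_deg _)

lemma mapV_not_deg1 {v : T.V} (hv : ¬ T.G.degree v = 1) :
    ¬ T'.G.degree (mapV T T' v) = 1 := by
  rw [mapV_deg3' T T' hv]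
  omega

lemma medv_transfer (h : T.QT = T'.QT) {v : T.V} (hv : ¬ T.G.degree v = 1)
    {a b c : N} (hab : a ≠ b) (hac : a ≠ c) (hbc : b ≠ c) :
    (T.med (T.leaf a) (T.leaf b) (T.leaf c) = v ↔
      T'.med (T'.leaf a) (T'.leaf b) (T'.leaf c) = mapV T T' v) := by
  obtain ⟨d1, d2, d3, hm⟩ := T.rep_spec ((T.deg13 v).resolve_left hv)
  have base := med_transfer h hab hac hbc d1 d2 d3
  constructor
  · intro hx
    rw [mapV_deg3 T T' hv]
    exact base.mp (hx.trans hm.symm)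
  · intro hx
    rw [mapV_deg3 T T' hv] at hx
    exact (base.mpr hx).trans hm

lemma mapV_inv (h : T.QT = T'.QT) : ∀ v, mapV T' T (mapV T T' v) = v := by
  intro v
  by_cases hv : T.G.degree v = 1
  · rw [mapV_deg1 T T' hv, mapV_leaf T' T]
    exact T.lbl_spec hv
  · have hv' := mapV_not_deg1 T T' hv
    obtain ⟨d1, d2, d3, hm⟩ := T.rep_spec ((T.deg13 v).resolve_left hv)
    obtain ⟨d1', d2', d3', hm'⟩ := T'.rep_spec ((T'.deg13 _).resolve_left hv')
    rw [mapV_deg3 T' T hv']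
    have he : T'.med (T'.leaf (T'.rep ((T'.deg13 _).resolve_left hv')).1)
        (T'.leaf (T'.rep ((T'.deg13 _).resolve_left hv')).2.1)
        (T'.leaf (T'.rep ((T'.deg13 _).resolve_left hv')).2.2) =
        T'.med (T'.leaf (T.rep ((T.deg13 v).resolve_left hv)).1)
          (T'.leaf (T.rep ((T.deg13 v).resolve_left hv)).2.1)
          (T'.leaf (T.rep ((T.deg13 v).resolve_left hv)).2.2) := by
      rw [← mapV_deg3 T T' hv]
      exact hm'
    have := (med_transfer h.symm d1' d2' d3' d1 d2 d3).mp he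
    rw [this, hm]

lemma mapV_ne (h : T.QT = T'.QT) {a b : T.V} (hab : a ≠ b) :
    mapV T T' a ≠ mapV T T' b := by
  intro he
  apply hab
  rw [← mapV_inv T T' h a, ← mapV_inv T T' h b, he]

lemma adj_case13 (h : T.QT = T'.QT) {a b : T.V}
    (hva : T.G.degree a = 1) (hvb : ¬ T.G.degree b = 1) :
    T.G.Adj a b ↔ T'.G.Adj (mapV T T' a) (mapV T T' b) := by
  have hb3 : T.G.degree b = 3 := (T.deg13 b).resolve_left hvb
  have hb3' : T'.G.degree (mapV T T' b) = 3 := mapV_deg3' T T' hvb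
  rw [mapV_deg1 T T' hva]
  conv_lhs => rw [← T.lbl_spec hva]
  rw [T.adj_leaf_iff hb3 (T.lbl hva), T'.adj_leaf_iff hb3' (T.lbl hva)]
  constructor
  · rintro ⟨s, t, hst, hxs, hxt, hmed, hsep⟩
    refine ⟨s, t, hst, hxs, hxt, (medv_transfer T T' h hvb hxs hxt hst).mp hmed, ?_⟩
    intro y hyx hys hyt hmy
    exact hsep y hyx hys hyt
      ((medv_transfer T T' h hvb hst (Ne.symm hys) (Ne.symm hyt)).mpr hmy)
  · rintro ⟨s, t, hst, hxs, hxt, hmed, hsep⟩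
    refine ⟨s, t, hst, hxs, hxt, (medv_transfer T T' h hvb hxs hxt hst).mpr hmed, ?_⟩
    intro y hyx hys hyt hmy
    exact hsep y hyx hys hyt
      ((medv_transfer T T' h hvb hst (Ne.symm hys) (Ne.symm hyt)).mp hmy)

lemma mapV_adj [Fintype N] (h4 : 4 ≤ Fintype.card N) (h : T.QT = T'.QT) (a b : T.V) :
    T.G.Adj a b ↔ T'.G.Adj (mapV T T' a) (mapV T T' b) := by
  by_cases hab : a = b
  · subst hab
    exact iff_of_false (T.G.loopless.irrefl a) (T'.G.loopless.irrefl _)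
  by_cases hva : T.G.degree a = 1
  · by_cases hvb : T.G.degree b = 1
    · -- two leaves are never adjacent
      have hx := T.lbl_spec hva
      have hy := T.lbl_spec hvb
      have hxy : T.lbl hva ≠ T.lbl hvb := by
        intro he
        apply hab
        rw [← hx, ← hy, he]
      apply iff_of_false
      · rw [← hx, ← hy]
        exact T.leaf_not_adj h4 hxy
      · rw [mapV_deg1 T T' hva, mapV_deg1 T T' hvb]
        exact T'.leaf_not_adj h4 hxy
    · exact adj_case13 T T' h hva hvb
  · by_cases hvb : T.G.degree b = 1
    · rw [T.G.adj_comm, T'.G.adj_comm]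
      exact adj_case13 T T' h hvb hva
    · -- both internal
      have ha3 : T.G.degree a = 3 := (T.deg13 a).resolve_left hva
      have hb3 : T.G.degree b = 3 := (T.deg13 b).resolve_left hvb
      rw [T.adj_int_iff ha3 hb3,
        T'.adj_int_iff (mapV_deg3' T T' hva) (mapV_deg3' T T' hvb)]
      constructor
      · rintro ⟨hpq, s, t, u, w, d1, d2, d3, d4, d5, d6, m1, m2, m3, m4, hsep⟩
        refine ⟨mapV_ne T T' h hpq, s, t, u, w, d1, d2, d3, d4, d5, d6,
          (medv_transfer T T' h hva d1 d2 d4).mp m1,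
          (medv_transfer T T' h hva d1 d3 d5).mp m2,
          (medv_transfer T T' h hvb d6 (Ne.symm d2) (Ne.symm d3)).mp m3,
          (medv_transfer T T' h hvb d6 (Ne.symm d4) (Ne.symm d5)).mp m4, ?_⟩
        intro y hys hyt hyu hyw ⟨e1, e2⟩
        exact hsep y hys hyt hyu hyw
          ⟨(medv_transfer T T' h hva d1 (Ne.symm hys) (Ne.symm hyt)).mpr e1,
            (medv_transfer T T' h hvb d6 (Ne.symm hyu) (Ne.symm hyw)).mpr e2⟩
      · rintro ⟨hpq, s, t, u, w, d1, d2, d3, d4, d5, d6, m1, m2, m3, m4, hsep⟩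
        refine ⟨hab, s, t, u, w, d1, d2, d3, d4, d5, d6,
          (medv_transfer T T' h hva d1 d2 d4).mpr m1,
          (medv_transfer T T' h hva d1 d3 d5).mpr m2,
          (medv_transfer T T' h hvb d6 (Ne.symm d2) (Ne.symm d3)).mpr m3,
          (medv_transfer T T' h hvb d6 (Ne.symm d4) (Ne.symm d5)).mpr m4, ?_⟩
        intro y hys hyt hyu hyw ⟨e1, e2⟩
        exact hsep y hys hyt hyu hyw
          ⟨(medv_transfer T T' h hva d1 (Ne.symm hys) (Ne.symm hyt)).mp e1,
            (medv_transfer T T' h hvb d6 (Ne.symm hyu) (Ne.symm hyw)).mp e2⟩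

end TernaryTree

/-- A ternary tree on `N` (with `|N| ≥ 4`) is uniquely determined, up to a
graph isomorphism fixing each labeled leaf, by its set of embedded quartet
topologies. -/
theorem tree_determined_by_embedded_quartet_topologies
    {N : Type} [Fintype N] (h4 : 4 ≤ Fintype.card N)
    (T T' : TernaryTree N) (h : T.QT = T'.QT) :
    TreeIso T T' := by
  refine ⟨⟨TernaryTree.mapV T T', TernaryTree.mapV T' T,
    TernaryTree.mapV_inv T T' h, TernaryTree.mapV_inv T' T h.symm⟩, ?_, ?_⟩
  · exact TernaryTree.mapV_adj T T' h4 h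
  · exact TernaryTree.mapV_leaf T T'
end

section
/- There exist a label set N with |N| = 5 and a cost function C on the quartet topologies of N such that every ternary tree T on N satisfies S(T) ≤ 4/5. In particular, the witness N = {u,v,w,x,y} with C(uv|wx) = 1, C(uw|vx) = C(ux|vw) = 0, C(xy|uv) = C(wy|uv) = C(uy|wx) = C(vy|wx) = 0, and C(ab|cd) = 1 for all remaining quartet topologies ab|cd, satisfies M = 5, m = 0, and C_T ≥ 1 for every ternary tree T on N, hence S(T) = (5 − C_T)/5 ≤ 4/5. -/
open SimpleGraph Walk

section WalkLemmas
variable {V : Type} {G : SimpleGraph V}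

lemma path_append_inter {a b c : V} {W1 : G.Walk a b} {W2 : G.Walk b c}
    (h : (W1.append W2).IsPath) {v : V} (h1 : v ∈ W1.support) (h2 : v ∈ W2.support) : v = b := by
  by_contra hv
  have hnd := (Walk.isPath_def _).1 h
  rw [Walk.support_append] at hnd
  have h2' : v ∈ W2.support.tail := by
    have h2c : v ∈ b :: W2.support.tail := W2.support_eq_cons ▸ h2
    rcases List.mem_cons.mp h2c with h | h
    · exact absurd h hv
    · exact h
  exact (List.disjoint_of_nodup_append hnd) h1 h2'

lemma exists_firstHit {a b : V} (W : G.Walk a b) (S : Set V)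
    (h : ∃ v ∈ W.support, v ∈ S) :
    ∃ s, s ∈ S ∧ ∃ (W1 : G.Walk a s) (W2 : G.Walk s b), W1.append W2 = W ∧
      ∀ v ∈ W1.support, v ∈ S → v = s := by
  induction W with
  | nil =>
    rename_i u
    refine ⟨u, ?_, Walk.nil, Walk.nil, rfl, ?_⟩
    · obtain ⟨v, hv, hvS⟩ := h
      simp at hv; subst hv; exact hvS
    · intro v hv _; simpa using hv
  | cons hadj rest ih =>
    rename_i u u' w
    by_cases hu : u ∈ S
    · exact ⟨u, hu, Walk.nil, Walk.cons hadj rest, rfl, fun v hv _ => by simpa using hv⟩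
    · have h' : ∃ v ∈ rest.support, v ∈ S := by
        obtain ⟨v, hv, hvS⟩ := h
        simp only [Walk.support_cons, List.mem_cons] at hv
        rcases hv with rfl | hv
        · exact absurd hvS hu
        · exact ⟨v, hv, hvS⟩
      obtain ⟨s, hsS, W1, W2, hW, hfirst⟩ := ih h'
      refine ⟨s, hsS, Walk.cons hadj W1, W2, by rw [Walk.cons_append, hW], ?_⟩
      intro v hv hvS
      simp only [Walk.support_cons, List.mem_cons] at hv
      rcases hv with rfl | hv
      · exact absurd hvS hu
      · exact hfirst v hv hvS

lemma exists_lastHit {a b : V} (W : G.Walk a b) (S : Set V)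
    (h : ∃ v ∈ W.support, v ∈ S) :
    ∃ t, t ∈ S ∧ ∃ (W1 : G.Walk a t) (W2 : G.Walk t b), W1.append W2 = W ∧
      ∀ v ∈ W2.support, v ∈ S → v = t := by
  obtain ⟨t, htS, U1, U2, hU, hlast⟩ := exists_firstHit W.reverse S (by
    obtain ⟨v, hv, hvS⟩ := h
    exact ⟨v, by rwa [Walk.support_reverse, List.mem_reverse], hvS⟩)
  refine ⟨t, htS, U2.reverse, U1.reverse, ?_, ?_⟩
  · rw [← Walk.reverse_append, hU, Walk.reverse_reverse]
  · intro v hv hvS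
    exact hlast v (by rwa [Walk.support_reverse, List.mem_reverse] at hv) hvS

lemma exists_adj_mem {v d : V} (W : G.Walk v d) (hne : v ≠ d) :
    ∃ n, G.Adj v n ∧ n ∈ W.support := by
  cases W with
  | nil => exact absurd rfl hne
  | cons hadj rest => exact ⟨_, hadj, by simp⟩

lemma internal_two_adj [DecidableEq V] {c d : V} {W : G.Walk c d} (hW : W.IsPath) {v : V}
    (hv : v ∈ W.support) (hc : v ≠ c) (hd : v ≠ d) :
    ∃ n1 n2, n1 ≠ n2 ∧ G.Adj v n1 ∧ G.Adj v n2 ∧ n1 ∈ W.support ∧ n2 ∈ W.support := by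
  have hspec := W.take_spec hv
  have hpath : ((W.takeUntil v hv).append (W.dropUntil v hv)).IsPath := by rwa [hspec]
  obtain ⟨n2, hn2adj, hn2mem⟩ := exists_adj_mem (W.dropUntil v hv) hd
  obtain ⟨n1, hn1adj, hn1mem⟩ := exists_adj_mem (W.takeUntil v hv).reverse hc
  rw [Walk.support_reverse, List.mem_reverse] at hn1mem
  refine ⟨n1, n2, ?_, hn1adj, hn2adj, W.support_takeUntil_subset hv hn1mem,
    W.support_dropUntil_subset hv hn2mem⟩
  intro hEq
  subst hEq
  exact hn1adj.ne' (path_append_inter hpath hn1mem hn2mem)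

lemma two_le_degree [DecidableEq V] [Fintype V] [DecidableRel G.Adj] {c d : V} {W : G.Walk c d}
    (hW : W.IsPath) {v : V} (hv : v ∈ W.support) (hc : v ≠ c) (hd : v ≠ d) :
    2 ≤ G.degree v := by
  obtain ⟨n1, n2, hne, h1, h2, -, -⟩ := internal_two_adj hW hv hc hd
  have hsub : ({n1, n2} : Finset V) ⊆ G.neighborFinset v := by
    intro x hx
    simp only [Finset.mem_insert, Finset.mem_singleton] at hx
    rcases hx with rfl | rfl <;> simp [SimpleGraph.mem_neighborFinset, h1, h2]
  calc 2 = ({n1, n2} : Finset V).card := (Finset.card_pair hne).symm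
    _ ≤ _ := Finset.card_le_card hsub

end WalkLemmas


/-- A leaf cannot be an internal vertex of a path. -/
lemma TernaryTree.leaf_not_internal {N : Type} (T : TernaryTree N) (x : N) {c d : T.V}
    {W : T.G.Walk c d} (hW : W.IsPath) (hmem : T.leaf x ∈ W.support)
    (hc : T.leaf x ≠ c) (hd : T.leaf x ≠ d) : False := by
  have h2 := two_le_degree hW hmem hc hd
  rw [T.leaf_deg x] at h2
  omega

/-- Every quartet of distinct labels has at least one embedded topology. -/
theorem TernaryTree.exists_consistent {N : Type} (T : TernaryTree N) (a b c d : N)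
    (hab : a ≠ b) (hac : a ≠ c) (had : a ≠ d) (hbc : b ≠ c) (hbd : b ≠ d) (hcd : c ≠ d) :
    T.Consistent a b c d ∨ T.Consistent a c b d ∨ T.Consistent a d b c := by
  classical
  have inj := fun {x y : N} (h : T.leaf x = T.leaf y) => T.leaf_inj h
  obtain ⟨WP⟩ := T.isTree.isConnected.preconnected (T.leaf a) (T.leaf b)
  obtain ⟨WQ⟩ := T.isTree.isConnected.preconnected (T.leaf c) (T.leaf d)
  set P := WP.bypass with hPdef
  have hP : P.IsPath := WP.bypass_isPath
  set Q := WQ.bypass with hQdef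
  have hQ : Q.IsPath := WQ.bypass_isPath
  by_cases hdisj : ∀ v, v ∈ P.support → v ∉ Q.support
  · exact Or.inl ⟨P, Q, hP, hQ, hdisj⟩
  push_neg at hdisj
  obtain ⟨z, hzP, hzQ⟩ := hdisj
  obtain ⟨s, hsQ, P1, P2, hPsplit, hfirst⟩ :=
    exists_firstHit P {v | v ∈ Q.support} ⟨z, hzP, hzQ⟩
  have hsQ' : s ∈ Q.support := hsQ
  obtain ⟨t, htQ, P21, P22, hP2split, hlast⟩ :=
    exists_lastHit P2 {v | v ∈ Q.support} ⟨s, Walk.start_mem_support _, hsQ⟩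
  have htQ' : t ∈ Q.support := htQ
  have hPp : (P1.append P2).IsPath := by rw [hPsplit]; exact hP
  have hP2p : P2.IsPath := hPp.of_append_right
  have hP2sp : (P21.append P22).IsPath := by rw [hP2split]; exact hP2p
  by_cases hst : s = t
  · -- unique intersection point: degree contradiction
    exfalso
    subst hst
    have hinter : ∀ v, v ∈ P.support → v ∈ Q.support → v = s := by
      intro v hvP hvQ
      rw [← hPsplit] at hvP
      rcases (Walk.mem_support_append_iff _ _).1 hvP with h1 | h2
      · exact hfirst v h1 hvQ
      · rw [← hP2split] at h2
        rcases (Walk.mem_support_append_iff _ _).1 h2 with h3 | h4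
        · have hP21p : P21.IsPath := hP2sp.of_append_left
          cases P21 with
          | nil => simpa using h3
          | cons hadj rest =>
            exfalso
            have hnd := (Walk.isPath_def _).1 hP21p
            rw [Walk.support_cons] at hnd
            exact (List.nodup_cons.1 hnd).1 (Walk.end_mem_support rest)
        · exact hlast v h4 hvQ
    have hsP : s ∈ P.support := by
      rw [← hPsplit]
      exact (Walk.mem_support_append_iff _ _).2 (Or.inl (Walk.end_mem_support _))
    have hsA : s ≠ T.leaf a := by
      intro h
      rw [h] at hsQ'
      exact T.leaf_not_internal a hQ hsQ' (fun hh => hac (inj hh)) (fun hh => had (inj hh))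
    have hsB : s ≠ T.leaf b := by
      intro h
      rw [h] at hsQ'
      exact T.leaf_not_internal b hQ hsQ' (fun hh => hbc (inj hh)) (fun hh => hbd (inj hh))
    have hsC : s ≠ T.leaf c := by
      intro h
      rw [h] at hsP
      exact T.leaf_not_internal c hP hsP (fun hh => hac (inj hh.symm))
        (fun hh => hbc (inj hh.symm))
    have hsD : s ≠ T.leaf d := by
      intro h
      rw [h] at hsP
      exact T.leaf_not_internal d hP hsP (fun hh => had (inj hh.symm))
        (fun hh => hbd (inj hh.symm))
    obtain ⟨n1, n2, hn12, ha1, ha2, hn1P, hn2P⟩ := internal_two_adj hP hsP hsA hsB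
    obtain ⟨m1, m2, hm12, hb1, hb2, hm1Q, hm2Q⟩ := internal_two_adj hQ hsQ' hsC hsD
    have hPQne : ∀ n m, T.G.Adj s n → n ∈ P.support → m ∈ Q.support → n = m → False := by
      intro n m hadj hnP hmQ hEq
      subst hEq
      exact hadj.ne' (hinter n hnP hmQ)
    have h1 : n1 ≠ m1 := fun h => hPQne n1 m1 ha1 hn1P hm1Q h
    have h2 : n1 ≠ m2 := fun h => hPQne n1 m2 ha1 hn1P hm2Q h
    have h3 : n2 ≠ m1 := fun h => hPQne n2 m1 ha2 hn2P hm1Q h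
    have h4 : n2 ≠ m2 := fun h => hPQne n2 m2 ha2 hn2P hm2Q h
    have hsub : ({n1, n2, m1, m2} : Finset T.V) ⊆ T.G.neighborFinset s := by
      intro x hx
      simp only [Finset.mem_insert, Finset.mem_singleton] at hx
      rcases hx with rfl | rfl | rfl | rfl <;>
        simp [SimpleGraph.mem_neighborFinset, ha1, ha2, hb1, hb2]
    have hcard : ({n1, n2, m1, m2} : Finset T.V).card = 4 := by
      rw [Finset.card_insert_of_notMem (by simp [hn12, h1, h2]),
        Finset.card_insert_of_notMem (by simp [h3, h4]), Finset.card_pair hm12]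
    have hdeg : 4 ≤ T.G.degree s := by
      calc 4 = ({n1, n2, m1, m2} : Finset T.V).card := hcard.symm
        _ ≤ _ := Finset.card_le_card hsub
    rcases T.deg13 s with h | h <;> omega
  · -- s ≠ t
    have hQspec := Q.take_spec hsQ'
    have hQp : ((Q.takeUntil s hsQ').append (Q.dropUntil s hsQ')).IsPath := by
      rw [hQspec]; exact hQ
    set Q1 := Q.takeUntil s hsQ' with hQ1def
    set Q2 := Q.dropUntil s hsQ' with hQ2def
    have hP1P22 : ∀ v, v ∈ P1.support → v ∈ P22.support → False := by
      intro v hv1 hv2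
      have hvP2 : v ∈ P2.support := by
        rw [← hP2split]
        exact (Walk.mem_support_append_iff _ _).2 (Or.inr hv2)
      have hvs : v = s := path_append_inter hPp hv1 hvP2
      subst hvs
      exact hst (path_append_inter hP2sp (Walk.start_mem_support P21) hv2)
    by_cases htQ2 : t ∈ Q2.support
    · -- t after s on Q : topology ac|bd
      have hQ2p : Q2.IsPath := hQp.of_append_right
      have hQ2spec := Q2.take_spec htQ2
      have hQ2sp : ((Q2.takeUntil t htQ2).append (Q2.dropUntil t htQ2)).IsPath := by
        rw [hQ2spec]; exact hQ2p
      set Q21 := Q2.takeUntil t htQ2 with hQ21def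
      set Q22 := Q2.dropUntil t htQ2 with hQ22def
      have hs_ne_Q22 : s ∉ Q22.support := fun h =>
        hst (path_append_inter hQ2sp (Walk.start_mem_support Q21) h)
      have ht_ne_Q1 : t ∉ Q1.support := fun h => by
        have : t ∈ Q2.support := htQ2
        exact hst (path_append_inter hQp h this).symm
      refine Or.inr (Or.inl ⟨(P1.append Q1.reverse).bypass, (P22.reverse.append Q22).bypass,
        Walk.bypass_isPath _, Walk.bypass_isPath _, ?_⟩)
      intro v hv1 hv2
      have hv1' := Walk.support_bypass_subset _ hv1
      have hv2' := Walk.support_bypass_subset _ hv2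
      rcases (Walk.mem_support_append_iff _ _).1 hv1' with hvP1 | hvQ1 <;>
        rcases (Walk.mem_support_append_iff _ _).1 hv2' with hvP22 | hvQ22
      · rw [Walk.support_reverse, List.mem_reverse] at hvP22
        exact hP1P22 v hvP1 hvP22
      · have hvQ : v ∈ Q.support :=
          Q.support_dropUntil_subset hsQ' (Q2.support_dropUntil_subset htQ2 hvQ22)
        have hvs : v = s := hfirst v hvP1 hvQ
        subst hvs
        exact hs_ne_Q22 hvQ22
      · rw [Walk.support_reverse, List.mem_reverse] at hvP22
        rw [Walk.support_reverse, List.mem_reverse] at hvQ1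
        have hvQ : v ∈ Q.support := Q.support_takeUntil_subset hsQ' hvQ1
        have hvt : v = t := hlast v hvP22 hvQ
        subst hvt
        exact ht_ne_Q1 hvQ1
      · rw [Walk.support_reverse, List.mem_reverse] at hvQ1
        have hvQ2 : v ∈ Q2.support := Q2.support_dropUntil_subset htQ2 hvQ22
        have hvs : v = s := path_append_inter hQp hvQ1 hvQ2
        subst hvs
        exact hs_ne_Q22 hvQ22
    · -- t before s on Q : topology ad|bc
      have htQ1 : t ∈ Q1.support := by
        have ht' : t ∈ (Q1.append Q2).support := by rw [hQspec]; exact htQ'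
        rcases (Walk.mem_support_append_iff _ _).1 ht' with h | h
        · exact h
        · exact absurd h htQ2
      have hQ1p : Q1.IsPath := hQp.of_append_left
      have hQ1spec := Q1.take_spec htQ1
      have hQ1sp : ((Q1.takeUntil t htQ1).append (Q1.dropUntil t htQ1)).IsPath := by
        rw [hQ1spec]; exact hQ1p
      set Q11 := Q1.takeUntil t htQ1 with hQ11def
      set Q12 := Q1.dropUntil t htQ1 with hQ12def
      have hs_ne_Q11 : s ∉ Q11.support := fun h =>
        hst (path_append_inter hQ1sp h (Walk.end_mem_support Q12))
      refine Or.inr (Or.inr ⟨(P1.append Q2).bypass, (P22.reverse.append Q11.reverse).bypass,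
        Walk.bypass_isPath _, Walk.bypass_isPath _, ?_⟩)
      intro v hv1 hv2
      have hv1' := Walk.support_bypass_subset _ hv1
      have hv2' := Walk.support_bypass_subset _ hv2
      rcases (Walk.mem_support_append_iff _ _).1 hv1' with hvP1 | hvQ2 <;>
        rcases (Walk.mem_support_append_iff _ _).1 hv2' with hvP22 | hvQ11
      · rw [Walk.support_reverse, List.mem_reverse] at hvP22
        exact hP1P22 v hvP1 hvP22
      · rw [Walk.support_reverse, List.mem_reverse] at hvQ11
        have hvQ : v ∈ Q.support :=
          Q.support_takeUntil_subset hsQ' (Q1.support_takeUntil_subset htQ1 hvQ11)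
        have hvs : v = s := hfirst v hvP1 hvQ
        subst hvs
        exact hs_ne_Q11 hvQ11
      · rw [Walk.support_reverse, List.mem_reverse] at hvP22
        have hvQ : v ∈ Q.support := Q.support_dropUntil_subset hsQ' hvQ2
        have hvt : v = t := hlast v hvP22 hvQ
        subst hvt
        exact htQ2 hvQ2
      · rw [Walk.support_reverse, List.mem_reverse] at hvQ11
        have hvQ1 : v ∈ Q1.support := Q1.support_takeUntil_subset htQ1 hvQ11
        have hvs : v = s := path_append_inter hQp hvQ1 hvQ2
        subst hvs
        exact hs_ne_Q11 hvQ11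


/-- `q` is one of the three quartet topologies of the 4-element set `S`. -/
def IsTopologyOn {N : Type} [DecidableEq N] (q : Sym2 (Sym2 N)) (S : Finset N) : Prop :=
  ∃ u v w x : N, u ≠ v ∧ u ≠ w ∧ u ≠ x ∧ v ≠ w ∧ v ≠ x ∧ w ≠ x ∧
    ({u, v, w, x} : Finset N) = S ∧ q = s(s(u, v), s(w, x))

/-- The cost `C_T` of a ternary tree `T` under the cost function `C`: the sum,
over all quartets, of the cost of the unique topology of that quartet that is
embedded in `T`, i.e. the sum of `C` over the set `Q_T` of embedded quartet
topologies. -/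
noncomputable def TernaryTree.cost {N : Type} [Fintype N]
    (T : TernaryTree N) (C : Sym2 (Sym2 N) → ℝ) : ℝ :=
  ∑ᶠ q ∈ T.QT, C q

/-- `m`: the sum, over all quartets, of the minimal cost among the three
topologies of the quartet. -/
noncomputable def minTotal {N : Type} [Fintype N] [DecidableEq N]
    (C : Sym2 (Sym2 N) → ℝ) : ℝ :=
  ∑ S ∈ Finset.powersetCard 4 (Finset.univ : Finset N),
    sInf (C '' {q | IsTopologyOn q S})

/-- `M`: the sum, over all quartets, of the maximal cost among the three
topologies of the quartet. -/
noncomputable def maxTotal {N : Type} [Fintype N] [DecidableEq N]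
    (C : Sym2 (Sym2 N) → ℝ) : ℝ :=
  ∑ S ∈ Finset.powersetCard 4 (Finset.univ : Finset N),
    sSup (C '' {q | IsTopologyOn q S})

/-! ### The explicit five-leaf witness -/

def Zset : Finset (Sym2 (Sym2 (Fin 5))) :=
  {s(s(0,2), s(1,3)), s(s(0,3), s(1,2)), s(s(3,4), s(0,1)), s(s(2,4), s(0,1)),
   s(s(0,4), s(2,3)), s(s(1,4), s(2,3))}

noncomputable def Cfun : Sym2 (Sym2 (Fin 5)) → ℝ := fun q => if q ∈ Zset then 0 else 1

lemma Cfun_nonneg (q : Sym2 (Sym2 (Fin 5))) : 0 ≤ Cfun q := by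
  unfold Cfun; split <;> norm_num

lemma Cfun_le_one (q : Sym2 (Sym2 (Fin 5))) : Cfun q ≤ 1 := by
  unfold Cfun; split <;> norm_num

lemma Cfun_eq_one {q : Sym2 (Sym2 (Fin 5))} (h : q ∉ Zset) : Cfun q = 1 := if_neg h

lemma Cfun_eq_zero {q : Sym2 (Sym2 (Fin 5))} (h : q ∈ Zset) : Cfun q = 0 := if_pos h

lemma sSup_image_Cfun {A : Set (Sym2 (Sym2 (Fin 5)))} {q1 : Sym2 (Sym2 (Fin 5))}
    (h1 : q1 ∈ A) (h1v : q1 ∉ Zset) : sSup (Cfun '' A) = 1 := by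
  apply le_antisymm
  · apply csSup_le ⟨Cfun q1, Set.mem_image_of_mem _ h1⟩
    rintro y ⟨q, -, rfl⟩; exact Cfun_le_one q
  · exact le_csSup ⟨1, fun y hy => by obtain ⟨q, -, rfl⟩ := hy; exact Cfun_le_one q⟩
      ⟨q1, h1, Cfun_eq_one h1v⟩

lemma sInf_image_Cfun {A : Set (Sym2 (Sym2 (Fin 5)))} {q0 : Sym2 (Sym2 (Fin 5))}
    (h0 : q0 ∈ A) (h0v : q0 ∈ Zset) : sInf (Cfun '' A) = 0 := by
  apply le_antisymm
  · exact (Cfun_eq_zero h0v) ▸ csInf_le ⟨0, fun y hy => by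
      obtain ⟨q, -, rfl⟩ := hy; exact Cfun_nonneg q⟩ (Set.mem_image_of_mem _ h0)
  · apply le_csInf ⟨Cfun q0, Set.mem_image_of_mem _ h0⟩
    rintro y ⟨q, -, rfl⟩; exact Cfun_nonneg q

lemma powersetCard_eq :
    Finset.powersetCard 4 (Finset.univ : Finset (Fin 5)) =
      ({{0,1,2,3},{0,1,2,4},{0,1,3,4},{0,2,3,4},{1,2,3,4}} : Finset (Finset (Fin 5))) := by
  decide

lemma maxTotal_Cfun : maxTotal Cfun = 5 := by
  unfold maxTotal
  rw [powersetCard_eq]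
  rw [Finset.sum_insert (by decide), Finset.sum_insert (by decide),
    Finset.sum_insert (by decide), Finset.sum_insert (by decide), Finset.sum_singleton]
  rw [sSup_image_Cfun (A := {q | IsTopologyOn q {0,1,2,3}}) (q1 := s(s(0,1),s(2,3)))
      ⟨0,1,2,3, by decide, by decide, by decide, by decide, by decide, by decide, by decide, rfl⟩
      (by decide),
    sSup_image_Cfun (A := {q | IsTopologyOn q {0,1,2,4}}) (q1 := s(s(0,2),s(1,4)))
      ⟨0,2,1,4, by decide, by decide, by decide, by decide, by decide, by decide, by decide, rfl⟩
      (by decide),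
    sSup_image_Cfun (A := {q | IsTopologyOn q {0,1,3,4}}) (q1 := s(s(0,3),s(1,4)))
      ⟨0,3,1,4, by decide, by decide, by decide, by decide, by decide, by decide, by decide, rfl⟩
      (by decide),
    sSup_image_Cfun (A := {q | IsTopologyOn q {0,2,3,4}}) (q1 := s(s(0,2),s(3,4)))
      ⟨0,2,3,4, by decide, by decide, by decide, by decide, by decide, by decide, by decide, rfl⟩
      (by decide),
    sSup_image_Cfun (A := {q | IsTopologyOn q {1,2,3,4}}) (q1 := s(s(1,2),s(3,4)))
      ⟨1,2,3,4, by decide, by decide, by decide, by decide, by decide, by decide, by decide, rfl⟩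
      (by decide)]
  norm_num

lemma minTotal_Cfun : minTotal Cfun = 0 := by
  unfold minTotal
  rw [powersetCard_eq]
  rw [Finset.sum_insert (by decide), Finset.sum_insert (by decide),
    Finset.sum_insert (by decide), Finset.sum_insert (by decide), Finset.sum_singleton]
  rw [sInf_image_Cfun (A := {q | IsTopologyOn q {0,1,2,3}}) (q0 := s(s(0,2),s(1,3)))
      ⟨0,2,1,3, by decide, by decide, by decide, by decide, by decide, by decide, by decide, rfl⟩
      (by decide),
    sInf_image_Cfun (A := {q | IsTopologyOn q {0,1,2,4}}) (q0 := s(s(2,4),s(0,1)))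
      ⟨2,4,0,1, by decide, by decide, by decide, by decide, by decide, by decide, by decide, rfl⟩
      (by decide),
    sInf_image_Cfun (A := {q | IsTopologyOn q {0,1,3,4}}) (q0 := s(s(3,4),s(0,1)))
      ⟨3,4,0,1, by decide, by decide, by decide, by decide, by decide, by decide, by decide, rfl⟩
      (by decide),
    sInf_image_Cfun (A := {q | IsTopologyOn q {0,2,3,4}}) (q0 := s(s(0,4),s(2,3)))
      ⟨0,4,2,3, by decide, by decide, by decide, by decide, by decide, by decide, by decide, rfl⟩
      (by decide),
    sInf_image_Cfun (A := {q | IsTopologyOn q {1,2,3,4}}) (q0 := s(s(1,4),s(2,3)))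
      ⟨1,4,2,3, by decide, by decide, by decide, by decide, by decide, by decide, by decide, rfl⟩
      (by decide)]
  norm_num

/-- Every ternary tree on `Fin 5` embeds some topology of cost 1. -/
lemma exists_QT_notin_Zset (T : TernaryTree (Fin 5)) : ∃ q, q ∈ T.QT ∧ q ∉ Zset := by
  rcases T.exists_consistent 0 2 3 4 (by decide) (by decide) (by decide) (by decide)
      (by decide) (by decide) with h | h | h
  · exact ⟨s(s(0,2),s(3,4)), ⟨0,2,3,4, by decide, by decide, by decide, by decide, by decide,
      by decide, rfl, h⟩, by decide⟩
  · exact ⟨s(s(0,3),s(2,4)), ⟨0,3,2,4, by decide, by decide, by decide, by decide, by decide,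
      by decide, rfl, h⟩, by decide⟩
  · rcases T.exists_consistent 1 2 3 4 (by decide) (by decide) (by decide) (by decide)
        (by decide) (by decide) with h2 | h2 | h2
    · exact ⟨s(s(1,2),s(3,4)), ⟨1,2,3,4, by decide, by decide, by decide, by decide, by decide,
        by decide, rfl, h2⟩, by decide⟩
    · exact ⟨s(s(1,3),s(2,4)), ⟨1,3,2,4, by decide, by decide, by decide, by decide, by decide,
        by decide, rfl, h2⟩, by decide⟩
    · obtain ⟨p1, q1, hp1, hq1, hd1⟩ := h
      obtain ⟨p2, q2, hp2, hq2, hd2⟩ := h2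
      obtain ⟨pp, -, huniq⟩ := T.isTree.existsUnique_path (T.leaf 2) (T.leaf 3)
      have hq12 : q1 = q2 := (huniq q1 hq1).trans (huniq q2 hq2).symm
      refine ⟨s(s(0,1),s(2,3)), ⟨0,1,2,3, by decide, by decide, by decide, by decide, by decide,
        by decide, rfl, ?_⟩, by decide⟩
      refine ⟨(p1.append p2.reverse).bypass, q1, SimpleGraph.Walk.bypass_isPath _, hq1, ?_⟩
      intro v hv
      have hv' := SimpleGraph.Walk.support_bypass_subset _ hv
      rcases (SimpleGraph.Walk.mem_support_append_iff _ _).1 hv' with hm | hm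
      · exact hd1 v hm
      · rw [SimpleGraph.Walk.support_reverse, List.mem_reverse] at hm
        rw [hq12]
        exact hd2 v hm

lemma cost_ge_one (T : TernaryTree (Fin 5)) : 1 ≤ T.cost Cfun := by
  obtain ⟨q0, hq0, hq0Z⟩ := exists_QT_notin_Zset T
  have hfin : T.QT.Finite := Set.toFinite _
  rw [TernaryTree.cost, finsum_mem_eq_finite_toFinset_sum _ hfin]
  have : Cfun q0 ≤ ∑ q ∈ hfin.toFinset, Cfun q :=
    Finset.single_le_sum (fun i _ => Cfun_nonneg i) (hfin.mem_toFinset.2 hq0)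
  rw [Cfun_eq_one hq0Z] at this
  exact this

/-- There are a label set `N` with `|N| = 5` and a cost function `C` on the
quartet topologies of `N` with `M = 5` and `m = 0` such that every ternary tree
`T` on `N` has cost `C_T ≥ 1`, and hence normalized tree benefit score
`S(T) = (M − C_T)/(M − m) ≤ 4/5`. -/
theorem exists_five_object_instance_score_le_four_fifths :
    ∃ (N : Type) (instF : Fintype N) (instD : DecidableEq N)
      (C : Sym2 (Sym2 N) → ℝ),
      @Fintype.card N instF = 5 ∧
      @maxTotal N instF instD C = 5 ∧
      @minTotal N instF instD C = 0 ∧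
      ∀ T : TernaryTree N,
        1 ≤ @TernaryTree.cost N instF T C ∧
        (@maxTotal N instF instD C - @TernaryTree.cost N instF T C) /
            (@maxTotal N instF instD C - @minTotal N instF instD C) ≤ 4 / 5 := by
  refine ⟨Fin 5, inferInstance, inferInstance, Cfun, by simp, maxTotal_Cfun, minTotal_Cfun, ?_⟩
  intro T
  have h1 := cost_ge_one T
  refine ⟨h1, ?_⟩
  rw [maxTotal_Cfun, minTotal_Cfun, sub_zero, div_le_div_iff₀ (by norm_num) (by norm_num)]
  linarith
end
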